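/- arXiv:2605.11142 — 5 statements merged into one kernel-verified Lean document; each statement's English description precedes it below -/
import Mathlib

section
/- Let K be an N×N real symmetric positive semidefinite matrix of rank r, with eigenvalues λ_1 ≥ λ_2 ≥ ⋯ ≥ λ_r > 0 and orthonormal eigenvectors u_1, …, u_r such that K = Σ_{j=1}^r λ_j u_j u_jᵀ. Let 1 ≤ k ≤ r and suppose λ_k > λ_{k+1}, where λ_{r+1} := 0. Then the spectral prefix K_k := Σ_{j=1}^k λ_j u_j u_jᵀ is the unique minimizer of ‖K − M‖_F² over all N×N real symmetric positive semidefinite matrices M with rank(M) ≤ k: any such M satisfying ‖K − M‖_F² ≤ ‖K − M'‖_F² for every PSD M' of rank at most k must equal K_k. -/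
set_option maxHeartbeats 4000000

open Matrix Finset

/-- Squared Frobenius norm of a real square matrix. -/
def frobSq {N : ℕ} (A : Matrix (Fin N) (Fin N) ℝ) : ℝ :=
  ∑ i, ∑ j, (A i j) ^ 2

namespace SpectralAux


variable {N : ℕ}

lemma conjT_eq (A : Matrix (Fin N) (Fin N) ℝ) : Aᴴ = Aᵀ :=
  Matrix.conjTranspose_eq_transpose_of_trivial A

lemma frobSq_nonneg (A : Matrix (Fin N) (Fin N) ℝ) : 0 ≤ frobSq A :=
  Finset.sum_nonneg fun _ _ => Finset.sum_nonneg fun _ _ => sq_nonneg _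

lemma eq_zero_of_frobSq_eq_zero {A : Matrix (Fin N) (Fin N) ℝ} (h : frobSq A = 0) : A = 0 := by
  ext i j
  have h1 : ∀ i ∈ (univ : Finset (Fin N)), (0:ℝ) ≤ ∑ j, (A i j)^2 :=
    fun _ _ => Finset.sum_nonneg fun _ _ => sq_nonneg _
  have h2 := (Finset.sum_eq_zero_iff_of_nonneg h1).mp h i (mem_univ i)
  have h3 := (Finset.sum_eq_zero_iff_of_nonneg (fun _ _ => sq_nonneg _)).mp h2 j (mem_univ j)
  simpa using pow_eq_zero_iff (n := 2) (by norm_num) |>.mp h3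

lemma vecMulVec_mulVec (v w x : Fin N → ℝ) :
    vecMulVec v w *ᵥ x = (w ⬝ᵥ x) • v := by
  ext i
  simp [Matrix.mulVec, Matrix.vecMulVec_apply, dotProduct, Finset.mul_sum, Finset.sum_mul,
    mul_comm, mul_left_comm, mul_assoc]

lemma mul_vecMulVec (A : Matrix (Fin N) (Fin N) ℝ) (v w : Fin N → ℝ) :
    A * vecMulVec v w = vecMulVec (A *ᵥ v) w := by
  ext i j
  simp [Matrix.mul_apply, Matrix.vecMulVec_apply, Matrix.mulVec, dotProduct, Finset.sum_mul,
    mul_assoc]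

lemma vecMulVec_mul_vecMulVec (v w x y : Fin N → ℝ) :
    vecMulVec v w * vecMulVec x y = (w ⬝ᵥ x) • vecMulVec v y := by
  ext i j
  simp [Matrix.mul_apply, Matrix.vecMulVec_apply, dotProduct, Finset.sum_mul, Finset.mul_sum]
  ring_nf
  apply Finset.sum_congr rfl
  intro l _
  ring

lemma trace_vecMulVec (v w : Fin N → ℝ) : Matrix.trace (vecMulVec v w) = v ⬝ᵥ w := by
  simp [Matrix.trace, Matrix.diag, Matrix.vecMulVec_apply, dotProduct]

lemma transpose_vecMulVec (v w : Fin N → ℝ) : (vecMulVec v w)ᵀ = vecMulVec w v := by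
  ext i j; simp [Matrix.vecMulVec_apply, mul_comm]

lemma posSemidef_vecMulVec (v : Fin N → ℝ) : (vecMulVec v v).PosSemidef := by
  refine Matrix.PosSemidef.of_dotProduct_mulVec_nonneg ?_ fun x => ?_
  · rw [Matrix.IsHermitian, conjT_eq, transpose_vecMulVec]
  · rw [vecMulVec_mulVec]
    simp only [star_trivial, dotProduct_smul, smul_eq_mul]
    rw [dotProduct_comm]
    exact mul_self_nonneg _

lemma trace_nonneg_of_psd {A : Matrix (Fin N) (Fin N) ℝ} (hA : A.PosSemidef) :
    0 ≤ Matrix.trace A := by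
  refine Finset.sum_nonneg fun i _ => ?_
  have := hA.dotProduct_mulVec_nonneg (Pi.single i 1)
  simpa [Matrix.mulVec_single, dotProduct, Pi.single_apply] using this

lemma dot_mulVec_left (A : Matrix (Fin N) (Fin N) ℝ) (x y : Fin N → ℝ) :
    (A *ᵥ x) ⬝ᵥ y = x ⬝ᵥ (Aᵀ *ᵥ y) := by
  simp [dotProduct, Matrix.mulVec, Finset.sum_mul, Finset.mul_sum]
  rw [Finset.sum_comm]
  apply Finset.sum_congr rfl
  intro l _
  apply Finset.sum_congr rfl
  intro i _
  ring

lemma ip_eq_trace (A B : Matrix (Fin N) (Fin N) ℝ) :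
    (∑ i, ∑ j, A i j * B i j) = Matrix.trace (Aᵀ * B) := by
  rw [Matrix.trace]
  rw [Finset.sum_comm]
  apply Finset.sum_congr rfl
  intro j _
  simp [Matrix.mul_apply, Matrix.diag]

lemma frobSq_eq_trace (A : Matrix (Fin N) (Fin N) ℝ) : frobSq A = Matrix.trace (Aᵀ * A) := by
  rw [← ip_eq_trace]
  simp [frobSq, sq]

lemma sum_mulVec {ι : Type*} (s : Finset ι) (f : ι → Matrix (Fin N) (Fin N) ℝ) (x : Fin N → ℝ) :
    (∑ j ∈ s, f j) *ᵥ x = ∑ j ∈ s, f j *ᵥ x := by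
  ext i
  simp [Matrix.mulVec, dotProduct, Finset.sum_apply, Matrix.sum_apply, Finset.sum_mul]
  rw [Finset.sum_comm]

lemma sandwich (V A B : Matrix (Fin N) (Fin N) ℝ) (h : Vᴴ * V = 1) :
    (V * A * Vᴴ) * (V * B * Vᴴ) = V * (A * B) * Vᴴ := by
  calc (V * A * Vᴴ) * (V * B * Vᴴ) = V * A * (Vᴴ * V) * (B * Vᴴ) := by noncomm_ring
    _ = V * (A * B) * Vᴴ := by rw [h, Matrix.mul_one]; noncomm_ring

lemma frobSq_sub_symm (K X : Matrix (Fin N) (Fin N) ℝ) (hK : Kᵀ = K) (hX : Xᵀ = X) :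
    frobSq (K - X) = Matrix.trace (K * K) - 2 * Matrix.trace (K * X) + Matrix.trace (X * X) := by
  rw [frobSq_eq_trace, Matrix.transpose_sub, hK, hX, Matrix.sub_mul, Matrix.mul_sub,
    Matrix.mul_sub, Matrix.trace_sub, Matrix.trace_sub, Matrix.trace_sub,
    Matrix.trace_mul_comm X K]
  ring


lemma stationarity {N : ℕ} (K M : Matrix (Fin N) (Fin N) ℝ) (hKs : Kᵀ = K) (hMs : Mᵀ = M)
    (hM : M.PosSemidef) (k : ℕ) (hMrank : M.rank ≤ k)
    (hopt : ∀ M' : Matrix (Fin N) (Fin N) ℝ, M'.PosSemidef → M'.rank ≤ k →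
      frobSq (K - M) ≤ frobSq (K - M')) :
    (K - M) * M = 0 := by
  set D := K - M with hD
  have hDs : Dᵀ = D := by rw [hD, Matrix.transpose_sub, hKs, hMs]
  set A0 := D * M with hA0
  set E := A0 * M + M * A0ᵀ with hE
  set F := A0 * M * A0ᵀ with hF
  -- key algebraic expansion
  have key : ∀ t : ℝ, K - ((1 + t • A0) * M * (1 + t • A0)ᴴ) = D - t • E - (t*t) • F := by
    intro t
    have hBH : (1 + t • A0)ᴴ = 1 + t • A0ᵀ := by
      rw [Matrix.conjTranspose_add, Matrix.conjTranspose_smul, Matrix.conjTranspose_one,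
        conjT_eq, star_trivial]
    rw [hBH]
    have expand : (1 + t • A0) * M * (1 + t • A0ᵀ)
        = M + t • E + (t*t) • F := by
      rw [hE, hF]
      simp only [Matrix.add_mul, Matrix.mul_add, Matrix.one_mul, Matrix.mul_one,
        Matrix.smul_mul, Matrix.mul_smul, smul_smul]
      module
    rw [expand, hD]
    module
  -- pointwise square expansion
  have point : ∀ (t : ℝ) (i j : Fin N), ((D - t • E - (t*t) • F) i j) ^ 2
      = (D i j)^2 + (-(2*t))*(D i j * E i j)
        + (t^2)*(((E i j)^2) - 2*(D i j * F i j)) + (2*t^3)*(E i j * F i j)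
        + (t^4)*((F i j)^2) := by
    intro t i j
    simp only [Matrix.sub_apply, Matrix.smul_apply, smul_eq_mul]
    ring
  set c2 := (∑ i, ∑ j, (((E i j)^2) - 2*(D i j * F i j))) with hc2
  set c3 := (∑ i, ∑ j, E i j * F i j) with hc3
  set c4 := (∑ i, ∑ j, (F i j)^2) with hc4
  set sDE := (∑ i, ∑ j, D i j * E i j) with hsDE
  have expandF : ∀ t : ℝ, frobSq (D - t • E - (t*t) • F)
      = frobSq D + (-(2*t)) * sDE + t^2 * c2 + (2*t^3) * c3 + t^4 * c4 := by
    intro t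
    simp only [frobSq, point t, Finset.sum_add_distrib, ← Finset.mul_sum]
    rfl
  -- sDE = 2 * frobSq A0
  have hMD : M * D = A0ᵀ := by
    rw [hA0, Matrix.transpose_mul, hMs, hDs]
  have hDE : sDE = 2 * frobSq A0 := by
    rw [hsDE, ip_eq_trace, hDs, hE, Matrix.mul_add, Matrix.trace_add]
    have e1 : Matrix.trace (D * (A0 * M)) = Matrix.trace (A0ᵀ * A0) := by
      rw [← Matrix.mul_assoc, Matrix.trace_mul_comm, ← Matrix.mul_assoc, hMD]
    have e2 : Matrix.trace (D * (M * A0ᵀ)) = Matrix.trace (A0ᵀ * A0) := by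
      rw [← Matrix.mul_assoc, ← hA0, Matrix.trace_mul_comm]
    rw [e1, e2, frobSq_eq_trace]
    ring
  set a := frobSq A0 with ha
  -- main inequality for all t
  have hineq : ∀ t : ℝ, 0 ≤ t * (-(4*a) + c2 * t + (2*c3) * t^2 + c4 * t^3) := by
    intro t
    have hpsd : ((1 + t • A0) * M * (1 + t • A0)ᴴ).PosSemidef :=
      hM.mul_mul_conjTranspose_same _
    have hrk : ((1 + t • A0) * M * (1 + t • A0)ᴴ).rank ≤ k :=
      le_trans (Matrix.rank_mul_le_left _ _) (le_trans (Matrix.rank_mul_le_right _ _) hMrank)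
    have h1 := hopt _ hpsd hrk
    rw [key t, expandF t] at h1
    rw [hDE] at h1
    have h2 : 0 ≤ -(2*t)*(2*a) + t^2*c2 + 2*t^3*c3 + t^4*c4 := by linarith
    calc (0:ℝ) ≤ -(2*t)*(2*a) + t^2*c2 + 2*t^3*c3 + t^4*c4 := h2
      _ = t * (-(4*a) + c2 * t + 2*c3 * t^2 + c4 * t^3) := by ring
  -- limit argument
  have hcont : Continuous fun t : ℝ => -(4*a) + c2 * t + (2*c3) * t^2 + c4 * t^3 := by
    fun_prop
  have htends : Filter.Tendsto (fun t : ℝ => -(4*a) + c2 * t + (2*c3) * t^2 + c4 * t^3)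
      (nhdsWithin 0 (Set.Ioi 0)) (nhds (-(4*a) + c2 * 0 + (2*c3) * 0^2 + c4 * 0^3)) :=
    (hcont.tendsto 0).mono_left nhdsWithin_le_nhds
  have hev : ∀ᶠ x in nhdsWithin 0 (Set.Ioi 0),
      0 ≤ -(4*a) + c2 * x + (2*c3) * x^2 + c4 * x^3 := by
    refine eventually_nhdsWithin_of_forall fun x hx => ?_
    by_contra hc
    push_neg at hc
    have := mul_neg_of_pos_of_neg hx hc
    linarith [hineq x]
  have h0 : (0:ℝ) ≤ -(4*a) + c2 * 0 + (2*c3) * 0^2 + c4 * 0^3 := ge_of_tendsto htends hev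
  have ha0 : a = 0 := by
    have := frobSq_nonneg A0
    rw [← ha] at this
    nlinarith [h0]
  exact eq_zero_of_frobSq_eq_zero ha0

end SpectralAux

open SpectralAux

/-- **Optimal spectral prefix (uniqueness).**
If `K` is an `N×N` real symmetric PSD matrix of rank `r` with spectral
decomposition `K = ∑ j, λ j • u j (u j)ᵀ` (eigenvalues positive and sorted
decreasingly, eigenvectors orthonormal), `1 ≤ k ≤ r`, and `λ_k > λ_{k+1}`
(with `λ_{r+1} := 0`, which holds automatically when `k = r` since `λ_r > 0`),
then any PSD matrix `M` of rank at most `k` minimizing the squared Frobenius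
distance to `K` over all PSD matrices of rank at most `k` equals the spectral
prefix `K_k = ∑_{j < k} λ j • u j (u j)ᵀ`. -/

theorem optimal_spectral_prefix_unique {N r : ℕ}
    (K : Matrix (Fin N) (Fin N) ℝ)
    (hK : K.PosSemidef) (hrank : K.rank = r)
    (lam : Fin r → ℝ) (u : Fin r → (Fin N → ℝ))
    (hpos : ∀ j, 0 < lam j)
    (hmono : ∀ i j : Fin r, i ≤ j → lam j ≤ lam i)
    (hortho : ∀ i j : Fin r, u i ⬝ᵥ u j = if i = j then (1 : ℝ) else 0)
    (hdecomp : K = ∑ j, lam j • vecMulVec (u j) (u j))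
    (k : ℕ) (hk1 : 1 ≤ k) (hkr : k ≤ r)
    (hgap : ∀ hk' : k < r,
      lam ⟨k, hk'⟩ < lam ⟨k - 1, lt_of_lt_of_le (Nat.sub_lt hk1 one_pos) hkr⟩)
    (M : Matrix (Fin N) (Fin N) ℝ) (hM : M.PosSemidef) (hMrank : M.rank ≤ k)
    (hopt : ∀ M' : Matrix (Fin N) (Fin N) ℝ, M'.PosSemidef → M'.rank ≤ k →
      frobSq (K - M) ≤ frobSq (K - M')) :
    M = ∑ j ∈ Finset.univ.filter (fun j : Fin r => (j : ℕ) < k),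
        lam j • vecMulVec (u j) (u j) := by
  classical
  have hKs : Kᵀ = K := by rw [← conjT_eq]; exact hK.1
  have hMs : Mᵀ = M := by rw [← conjT_eq]; exact hM.1
  -- Step A: stationarity
  have hstat : (K - M) * M = 0 := stationarity K M hKs hMs hM k hMrank hopt
  have hKM : K * M = M * M := by
    rw [Matrix.sub_mul] at hstat
    exact sub_eq_zero.mp hstat
  have hstat' : M * (K - M) = 0 := by
    have := congrArg Matrix.transpose hstat
    rwa [Matrix.transpose_mul, Matrix.transpose_sub, hKs, hMs, Matrix.transpose_zero] at this
  -- spectral data of M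
  set μ : Fin N → ℝ := hM.1.eigenvalues with hμdef
  set V : Matrix (Fin N) (Fin N) ℝ := (hM.1.eigenvectorUnitary : Matrix (Fin N) (Fin N) ℝ)
    with hVdef
  have hVV : Vᴴ * V = 1 := by
    rw [← Matrix.star_eq_conjTranspose]
    exact (Matrix.mem_unitaryGroup_iff').mp (hM.1.eigenvectorUnitary).2
  have hVV' : V * Vᴴ = 1 := by
    rw [← Matrix.star_eq_conjTranspose]
    exact (Matrix.mem_unitaryGroup_iff).mp (hM.1.eigenvectorUnitary).2
  have hμnn : ∀ i, 0 ≤ μ i := fun i => hM.eigenvalues_nonneg i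
  have hMspec : M = V * Matrix.diagonal μ * Vᴴ := by
    have := hM.1.spectral_theorem
    rwa [RCLike.ofReal_real_eq_id, Function.id_comp, Unitary.conjStarAlgAut_apply,
      Matrix.star_eq_conjTranspose] at this
  set e : Fin N → ℝ := fun i => if μ i = 0 then 0 else 1 with hedef
  set Q : Matrix (Fin N) (Fin N) ℝ := V * Matrix.diagonal e * Vᴴ with hQdef
  have he_nn : ∀ i, 0 ≤ e i := fun i => by by_cases h : μ i = 0 <;> simp [hedef, h]
  have hQH : Qᴴ = Q := by
    rw [hQdef]
    simp only [Matrix.conjTranspose_mul, Matrix.conjTranspose_conjTranspose,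
      Matrix.diagonal_conjTranspose]
    have : star e = e := by funext i; simp
    rw [this, ← Matrix.mul_assoc]
  have hQs : Qᵀ = Q := by rw [← conjT_eq, hQH]
  have hee : Matrix.diagonal e * Matrix.diagonal e = Matrix.diagonal e := by
    rw [Matrix.diagonal_mul_diagonal]
    have hfe : (fun i => e i * e i) = e := by
      funext i; by_cases h : μ i = 0 <;> simp [hedef, h]
    rw [hfe]
  have hQQ : Q * Q = Q := by rw [hQdef, sandwich V _ _ hVV, hee]
  have hQpsd : Q.PosSemidef := by
    rw [hQdef]
    exact (Matrix.PosSemidef.diagonal he_nn).mul_mul_conjTranspose_same V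
  have hIQpsd : (1 - Q).PosSemidef := by
    have h1Q : (1 : Matrix (Fin N) (Fin N) ℝ) - Q
        = V * Matrix.diagonal (fun i => 1 - e i) * Vᴴ := by
      have hd : Matrix.diagonal (fun i => 1 - e i)
          = 1 - Matrix.diagonal e := by
        rw [← Matrix.diagonal_one, Matrix.diagonal_sub]
      rw [hd, Matrix.mul_sub, Matrix.mul_one, Matrix.sub_mul, hVV', hQdef]
    rw [h1Q]
    refine (Matrix.PosSemidef.diagonal ?_).mul_mul_conjTranspose_same V
    intro i
    by_cases h : μ i = 0 <;> simp [hedef, h]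
  have htrQ : Matrix.trace Q = (M.rank : ℝ) := by
    have h1 : Matrix.trace Q = Matrix.trace (Matrix.diagonal e) := by
      rw [hQdef, Matrix.trace_mul_comm (V * Matrix.diagonal e) Vᴴ, ← Matrix.mul_assoc, hVV,
        Matrix.one_mul]
    have h2 : M.rank = (univ.filter fun i => μ i ≠ 0).card := by
      rw [hM.1.rank_eq_card_non_zero_eigs, Fintype.card_subtype]
    rw [h1, Matrix.trace_diagonal, h2, Finset.card_filter]
    push_cast
    apply Finset.sum_congr rfl
    intro i _
    by_cases h : μ i = 0 <;> simp [hedef, h]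
  have hVM : Vᴴ * M = Matrix.diagonal μ * Vᴴ := by
    rw [hMspec]
    calc Vᴴ * (V * Matrix.diagonal μ * Vᴴ) = (Vᴴ * V) * (Matrix.diagonal μ * Vᴴ) := by
          noncomm_ring
      _ = Matrix.diagonal μ * Vᴴ := by rw [hVV, Matrix.one_mul]
  have hQM : Q * M = M := by
    rw [hQdef, hMspec, sandwich V _ _ hVV, Matrix.diagonal_mul_diagonal]
    have hfe : (fun i => e i * μ i) = μ := by
      funext i; by_cases h : μ i = 0 <;> simp [hedef, h]
    rw [hfe]
  have hQKM : Q * (K - M) = 0 := by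
    have hDY : Matrix.diagonal μ * (Vᴴ * (K - M)) = 0 := by
      calc Matrix.diagonal μ * (Vᴴ * (K - M)) = (Matrix.diagonal μ * Vᴴ) * (K - M) := by
            rw [Matrix.mul_assoc]
        _ = Vᴴ * (M * (K - M)) := by rw [← hVM, Matrix.mul_assoc]
        _ = 0 := by rw [hstat', Matrix.mul_zero]
    have heY : Matrix.diagonal e * (Vᴴ * (K - M)) = 0 := by
      ext i j
      rw [Matrix.diagonal_mul, Matrix.zero_apply]
      by_cases h : μ i = 0
      · simp [hedef, h]
      · have h1 : μ i * (Vᴴ * (K - M)) i j = 0 := by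
          have := congrArg (fun A => A i j) hDY
          simpa [Matrix.diagonal_mul] using this
        have h2 : (Vᴴ * (K - M)) i j = 0 := (mul_eq_zero.mp h1).resolve_left h
        rw [h2, mul_zero]
    have : Q * (K - M) = V * (Matrix.diagonal e * (Vᴴ * (K - M))) := by
      rw [hQdef]; noncomm_ring
    rw [this, heY, Matrix.mul_zero]
  have hQK : Q * K = M := by
    have h1 : Q * K - Q * M = 0 := by rw [← Matrix.mul_sub, hQKM]
    rw [sub_eq_zero.mp h1, hQM]
  have hKQ : K * Q = M := by
    have := congrArg Matrix.transpose hQK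
    rwa [Matrix.transpose_mul, hKs, hQs, hMs] at this
  -- eigen-facts of K
  have hKu : ∀ i, K *ᵥ u i = lam i • u i := by
    intro i
    conv_lhs => rw [hdecomp]
    rw [SpectralAux.sum_mulVec]
    have hterm : ∀ j, (lam j • vecMulVec (u j) (u j)) *ᵥ u i
        = if j = i then lam j • u j else 0 := by
      intro j
      rw [Matrix.smul_mulVec, vecMulVec_mulVec, hortho j i]
      by_cases h : j = i <;> simp [h]
    rw [Finset.sum_congr rfl (fun j _ => hterm j), Finset.sum_ite_eq' univ i]
    simp
  have hmulterm : ∀ i' j : Fin r, (lam i' • vecMulVec (u i') (u i')) * (lam j • vecMulVec (u j) (u j))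
      = if i' = j then (lam i' * lam i') • vecMulVec (u i') (u i') else 0 := by
    intro i' j
    rw [smul_mul_assoc, mul_smul_comm, SpectralAux.vecMulVec_mul_vecMulVec, hortho i' j]
    by_cases h : i' = j
    · subst h; simp [smul_smul]
    · simp [h]
  have hKK : K * K = ∑ j, (lam j * lam j) • vecMulVec (u j) (u j) := by
    conv_lhs => rw [hdecomp]
    rw [Finset.sum_mul_sum]
    rw [Finset.sum_congr rfl (fun i' (_ : i' ∈ univ) =>
      Finset.sum_congr rfl (fun j (_ : j ∈ univ) => hmulterm i' j))]
    apply Finset.sum_congr rfl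
    intro i' _
    rw [Finset.sum_ite_eq univ i']
    simp
  -- the prefix candidate
  set Afin : Finset (Fin r) := Finset.univ.filter (fun j : Fin r => (j : ℕ) < k) with hAdef
  set P : Matrix (Fin N) (Fin N) ℝ := ∑ j ∈ Afin, lam j • vecMulVec (u j) (u j) with hPdef
  have hcardA : Afin.card = k := by
    rw [← Fintype.card_fin k]
    apply Finset.card_bij
      (fun (j : Fin r) (hj : j ∈ Afin) => (⟨(j : ℕ), (Finset.mem_filter.mp hj).2⟩ : Fin k))
    · intro a ha; exact Finset.mem_univ _
    · intro a ha b hb h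
      exact Fin.ext (by simpa using congrArg Fin.val h)
    · intro b _
      exact ⟨⟨(b : ℕ), b.2.trans_le hkr⟩,
        Finset.mem_filter.mpr ⟨Finset.mem_univ _, b.2⟩, rfl⟩
  set W : Matrix (Fin N) {j : Fin r // (j : ℕ) < k} ℝ :=
    Matrix.of (fun i j => Real.sqrt (lam j.1) * u j.1 i) with hWdef
  have hPW : P = W * Wᴴ := by
    ext i i'
    rw [hPdef, Matrix.sum_apply,
      Finset.sum_subtype (p := fun j : Fin r => (j : ℕ) < k) Afin (by intro x; simp [hAdef])
        (fun j => (lam j • vecMulVec (u j) (u j)) i i')]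
    rw [Matrix.mul_apply]
    apply Finset.sum_congr rfl
    intro j _
    rw [Matrix.conjTranspose_apply]
    simp only [Matrix.smul_apply, Matrix.vecMulVec_apply, smul_eq_mul, hWdef, Matrix.of_apply,
      star_trivial]
    linear_combination (-(u j.1 i * u j.1 i')) * Real.sq_sqrt (hpos j.1).le
  have hPpsd : P.PosSemidef := by rw [hPW]; exact Matrix.posSemidef_self_mul_conjTranspose W
  have hPrank : P.rank ≤ k := by
    rw [hPW]
    refine le_trans (Matrix.rank_mul_le_left W Wᴴ) (le_trans (Matrix.rank_le_card_width W) ?_)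
    rw [Fintype.card_subtype]
    exact le_of_eq hcardA
  have hKP : K * P = ∑ j ∈ Afin, (lam j * lam j) • vecMulVec (u j) (u j) := by
    rw [hPdef]
    conv_lhs => rw [hdecomp]
    rw [Finset.sum_mul_sum]
    rw [Finset.sum_congr rfl (fun i' (_ : i' ∈ univ) =>
      Finset.sum_congr rfl (fun j (_ : j ∈ Afin) => hmulterm i' j))]
    rw [Finset.sum_congr rfl (fun i' (_ : i' ∈ univ) => Finset.sum_ite_eq Afin i' _)]
    rw [Finset.sum_ite_mem univ Afin _, Finset.univ_inter]
  have hPP : P * P = ∑ j ∈ Afin, (lam j * lam j) • vecMulVec (u j) (u j) := by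
    rw [hPdef]
    rw [Finset.sum_mul_sum]
    rw [Finset.sum_congr rfl (fun i' (_ : i' ∈ Afin) =>
      Finset.sum_congr rfl (fun j (_ : j ∈ Afin) => hmulterm i' j))]
    rw [Finset.sum_congr rfl (fun i' (_ : i' ∈ Afin) => Finset.sum_ite_eq Afin i' _)]
    apply Finset.sum_congr rfl
    intro i' hi'
    simp [hi']
  set T : ℝ := ∑ j ∈ Afin, (lam j)^2 with hTdef
  have htr_aux : Matrix.trace (∑ j ∈ Afin, (lam j * lam j) • vecMulVec (u j) (u j)) = T := by
    rw [Matrix.trace_sum, hTdef]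
    apply Finset.sum_congr rfl
    intro j _
    rw [Matrix.trace_smul, SpectralAux.trace_vecMulVec, hortho j j]
    simp [sq]
  have htrKP : Matrix.trace (K * P) = T := by rw [hKP, htr_aux]
  have htrPP : Matrix.trace (P * P) = T := by rw [hPP, htr_aux]
  -- optimality gives trace (M*M) ≥ T
  have hMMT : T ≤ Matrix.trace (M * M) := by
    have hPs : Pᵀ = P := by rw [← conjT_eq]; exact hPpsd.1
    have h1 := hopt P hPpsd hPrank
    rw [frobSq_sub_symm K M hKs hMs, frobSq_sub_symm K P hKs hPs, htrKP, htrPP] at h1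
    have h2 : Matrix.trace (K * M) = Matrix.trace (M * M) := by rw [hKM]
    linarith
  -- the alignment numbers
  set s : Fin r → ℝ := fun j => u j ⬝ᵥ (Q *ᵥ u j) with hsdef
  have hs0 : ∀ j, 0 ≤ s j := by
    intro j
    have := hQpsd.dotProduct_mulVec_nonneg (u j)
    simpa [hsdef] using this
  have hs1 : ∀ j, s j ≤ 1 := by
    intro j
    have h2 := hIQpsd.dotProduct_mulVec_nonneg (u j)
    rw [Matrix.sub_mulVec, Matrix.one_mulVec, dotProduct_sub] at h2
    simp only [star_trivial] at h2
    rw [hortho j j] at h2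
    simp only [if_pos rfl] at h2
    simp only [hsdef]
    simp only [if_true] at h2
    linarith
  have htrQvv : ∀ j : Fin r, Matrix.trace (vecMulVec (u j) (u j) * Q) = s j := by
    intro j
    rw [Matrix.trace_mul_comm, SpectralAux.mul_vecMulVec, SpectralAux.trace_vecMulVec, dotProduct_comm, hsdef]
  have hssum : ∑ j, s j ≤ (k : ℝ) := by
    set U : Matrix (Fin N) (Fin N) ℝ := ∑ j, vecMulVec (u j) (u j) with hUdef
    have hUU : U * U = U := by
      rw [hUdef, Finset.sum_mul_sum]
      have hterm : ∀ i' j : Fin r, vecMulVec (u i') (u i') * vecMulVec (u j) (u j)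
          = if i' = j then vecMulVec (u i') (u i') else 0 := by
        intro i' j
        rw [SpectralAux.vecMulVec_mul_vecMulVec, hortho i' j]
        by_cases h : i' = j <;> simp [h]
      rw [Finset.sum_congr rfl (fun i' (_ : i' ∈ univ) =>
        Finset.sum_congr rfl (fun j (_ : j ∈ univ) => hterm i' j))]
      apply Finset.sum_congr rfl
      intro i' _
      rw [Finset.sum_ite_eq univ i']
      simp
    have hUs : Uᵀ = U := by
      rw [hUdef, Matrix.transpose_sum]
      exact Finset.sum_congr rfl fun j _ => SpectralAux.transpose_vecMulVec _ _
    have hBB : (1 - U) * (1 - U)ᴴ = 1 - U := by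
      rw [conjT_eq, Matrix.transpose_sub, Matrix.transpose_one, hUs]
      have h1 : (1 - U) * (1 - U) = 1 - U - U + U * U := by noncomm_ring
      rw [h1, hUU]
      abel
    have hpsd2 : ((1 - U)ᴴ * Q * (1 - U)).PosSemidef := hQpsd.conjTranspose_mul_mul_same (1 - U)
    have h2 : 0 ≤ Matrix.trace ((1 - U)ᴴ * Q * (1 - U)) := trace_nonneg_of_psd hpsd2
    have h3 : Matrix.trace ((1 - U)ᴴ * Q * (1 - U)) = Matrix.trace Q - ∑ j, s j := by
      have e1 : Matrix.trace ((1 - U)ᴴ * Q * (1 - U)) = Matrix.trace (Q * (1 - U)) := by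
        calc Matrix.trace ((1 - U)ᴴ * Q * (1 - U))
            = Matrix.trace ((1 - U) * ((1 - U)ᴴ * Q)) := Matrix.trace_mul_comm _ _
          _ = Matrix.trace ((1 - U) * (1 - U)ᴴ * Q) := by rw [Matrix.mul_assoc]
          _ = Matrix.trace ((1 - U) * Q) := by rw [hBB]
          _ = Matrix.trace (Q * (1 - U)) := Matrix.trace_mul_comm _ _
      rw [e1, Matrix.mul_sub, Matrix.mul_one, Matrix.trace_sub]
      congr 1
      rw [hUdef, Finset.mul_sum, Matrix.trace_sum]
      exact Finset.sum_congr rfl fun j _ => by rw [← htrQvv j, Matrix.trace_mul_comm]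
    have h4 : Matrix.trace Q ≤ (k : ℝ) := by
      rw [htrQ]
      exact_mod_cast hMrank
    linarith
  have htrMM : Matrix.trace (M * M) = ∑ j, (lam j)^2 * s j := by
    have hMM : M * M = K * (Q * K) := by
      calc M * M = (K * Q) * (Q * K) := by rw [hKQ, hQK]
        _ = K * ((Q * Q) * K) := by noncomm_ring
        _ = K * (Q * K) := by rw [hQQ]
    rw [hMM, Matrix.trace_mul_comm K (Q * K), Matrix.mul_assoc, Matrix.trace_mul_comm Q (K * K),
      hKK, Finset.sum_mul, Matrix.trace_sum]
    apply Finset.sum_congr rfl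
    intro j _
    rw [smul_mul_assoc, Matrix.trace_smul, htrQvv j]
    simp [sq]
  -- equality analysis
  have hs_eq : (∀ j : Fin r, (j : ℕ) < k → s j = 1) ∧ (∀ j : Fin r, k ≤ (j : ℕ) → s j = 0) := by
    set Bfin : Finset (Fin r) := Finset.univ.filter (fun j : Fin r => ¬ (j : ℕ) < k) with hBdef
    have hsplit : ∑ j ∈ Afin, (lam j)^2 * s j + ∑ j ∈ Bfin, (lam j)^2 * s j
        = ∑ j, (lam j)^2 * s j :=
      Finset.sum_filter_add_sum_filter_not univ (fun j : Fin r => (j : ℕ) < k) _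
    have hTle : T ≤ ∑ j ∈ Afin, (lam j)^2 * s j + ∑ j ∈ Bfin, (lam j)^2 * s j := by
      rw [hsplit, ← htrMM]; exact hMMT
    have hssum' : ∑ j ∈ Afin, s j + ∑ j ∈ Bfin, s j ≤ (k : ℝ) := by
      have := Finset.sum_filter_add_sum_filter_not univ (fun j : Fin r => (j : ℕ) < k) s
      linarith [hssum]
    have f3 : ∑ j ∈ Afin, (lam j)^2 * (1 - s j) = T - ∑ j ∈ Afin, (lam j)^2 * s j := by
      rw [hTdef, ← Finset.sum_sub_distrib]
      exact Finset.sum_congr rfl fun j _ => by ring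
    have f4 : ∑ j ∈ Afin, (1 - s j) = (k : ℝ) - ∑ j ∈ Afin, s j := by
      rw [Finset.sum_sub_distrib, Finset.sum_const, hcardA, nsmul_eq_mul, mul_one]
    have f5 : ∑ j ∈ Bfin, s j ≤ ∑ j ∈ Afin, (1 - s j) := by
      rw [f4]; linarith
    have fB0 : ∑ j ∈ Bfin, s j ≥ 0 := Finset.sum_nonneg fun j _ => hs0 j
    have fA0 : (0:ℝ) ≤ ∑ j ∈ Afin, (lam j)^2 * (1 - s j) :=
      Finset.sum_nonneg fun j hj => mul_nonneg (sq_nonneg _) (by linarith [hs1 j])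
    -- Bfin part vanishes
    have hB0 : ∀ j ∈ Bfin, s j = 0 := by
      by_cases hkr' : k < r
      · set ck := lam ⟨k, hkr'⟩ with hckdef
        set t0 := lam ⟨k - 1, lt_of_lt_of_le (Nat.sub_lt hk1 one_pos) hkr⟩ with ht0def
        have hgapk : ck < t0 := hgap hkr'
        have hck : 0 < ck := hpos _
        have h6 : ck^2 < t0^2 := by nlinarith
        have f1 : ∑ j ∈ Bfin, (lam j)^2 * s j ≤ ck^2 * ∑ j ∈ Bfin, s j := by
          rw [Finset.mul_sum]
          refine Finset.sum_le_sum fun j hj => ?_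
          have hkj : (⟨k, hkr'⟩ : Fin r) ≤ j := by
            have := (Finset.mem_filter.mp hj).2
            exact Fin.le_def.mpr (le_of_not_gt this)
          have hl : lam j ≤ ck := hmono _ _ hkj
          have : (lam j)^2 ≤ ck^2 := pow_le_pow_left₀ (hpos j).le hl 2
          exact mul_le_mul_of_nonneg_right this (hs0 j)
        have f2 : t0^2 * ∑ j ∈ Afin, (1 - s j) ≤ ∑ j ∈ Afin, (lam j)^2 * (1 - s j) := by
          rw [Finset.mul_sum]
          refine Finset.sum_le_sum fun j hj => ?_
          have hjk : j ≤ (⟨k - 1, lt_of_lt_of_le (Nat.sub_lt hk1 one_pos) hkr⟩ : Fin r) := by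
            have := (Finset.mem_filter.mp hj).2
            exact Fin.le_def.mpr (Nat.le_sub_one_of_lt this)
          have hl : t0 ≤ lam j := hmono _ _ hjk
          have : t0^2 ≤ (lam j)^2 := pow_le_pow_left₀ (hpos _).le hl 2
          exact mul_le_mul_of_nonneg_right this (by linarith [hs1 j])
        have g1 : t0^2 * (∑ j ∈ Bfin, s j) ≤ t0^2 * (∑ j ∈ Afin, (1 - s j)) :=
          mul_le_mul_of_nonneg_left f5 (sq_nonneg t0)
        have hb0 : ∑ j ∈ Bfin, s j = 0 := by nlinarith
        intro j hj
        exact (Finset.sum_eq_zero_iff_of_nonneg (fun j _ => hs0 j)).mp hb0 j hj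
      · intro j hj
        exfalso
        have h1 := (Finset.mem_filter.mp hj).2
        exact h1 (lt_of_lt_of_le j.isLt (le_of_not_gt hkr'))
    have hBsum0 : ∑ j ∈ Bfin, (lam j)^2 * s j = 0 :=
      Finset.sum_eq_zero fun j hj => by rw [hB0 j hj, mul_zero]
    have hA1 : ∀ j ∈ Afin, s j = 1 := by
      have hA0 : ∑ j ∈ Afin, (lam j)^2 * (1 - s j) = 0 := by linarith
      intro j hj
      have := (Finset.sum_eq_zero_iff_of_nonneg
        (fun j hj => mul_nonneg (sq_nonneg _) (by linarith [hs1 j]))).mp hA0 j hj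
      have h2 : (1 : ℝ) - s j = 0 :=
        (mul_eq_zero.mp this).resolve_left (pow_ne_zero 2 (hpos j).ne')
      linarith
    constructor
    · intro j hjk
      exact hA1 j (Finset.mem_filter.mpr ⟨Finset.mem_univ _, hjk⟩)
    · intro j hjk
      exact hB0 j (Finset.mem_filter.mpr ⟨Finset.mem_univ _, not_lt.mpr hjk⟩)
  -- conclude
  have hdotQQ : ∀ j : Fin r, (Q *ᵥ u j) ⬝ᵥ (Q *ᵥ u j) = s j := by
    intro j
    rw [dot_mulVec_left, hQs, Matrix.mulVec_mulVec, hQQ]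
  have hQu1 : ∀ j : Fin r, (j : ℕ) < k → Q *ᵥ u j = u j := by
    intro j hjk
    have hs1j : s j = 1 := hs_eq.1 j hjk
    have c1 : u j ⬝ᵥ u j = 1 := by rw [hortho j j]; simp
    have c3 : u j ⬝ᵥ (Q *ᵥ u j) = s j := by simp only [hsdef]
    have hw : (u j - Q *ᵥ u j) ⬝ᵥ (u j - Q *ᵥ u j) = 0 := by
      simp only [sub_dotProduct, dotProduct_sub]
      rw [c1, hdotQQ j, dotProduct_comm (Q *ᵥ u j) (u j), c3, hs1j]
      ring
    have h0 := dotProduct_self_eq_zero.mp hw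
    exact (sub_eq_zero.mp h0).symm
  have hQu0 : ∀ j : Fin r, k ≤ (j : ℕ) → Q *ᵥ u j = 0 := by
    intro j hjk
    have hs0j : s j = 0 := hs_eq.2 j hjk
    exact dotProduct_self_eq_zero.mp (by rw [hdotQQ j, hs0j])
  have hvv0 : ∀ w : Fin N → ℝ, vecMulVec (0 : Fin N → ℝ) w = 0 := by
    intro w; ext i j; simp [Matrix.vecMulVec_apply]
  have final : M = P := by
    calc M = Q * K := hQK.symm
      _ = ∑ j, lam j • vecMulVec (Q *ᵥ u j) (u j) := by
          conv_lhs => rw [hdecomp]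
          rw [Finset.mul_sum]
          exact Finset.sum_congr rfl fun j _ => by rw [mul_smul_comm, SpectralAux.mul_vecMulVec]
      _ = ∑ j : Fin r, (if (j : ℕ) < k then lam j • vecMulVec (u j) (u j) else 0) := by
          refine Finset.sum_congr rfl fun j _ => ?_
          by_cases h : (j : ℕ) < k
          · rw [hQu1 j h, if_pos h]
          · rw [hQu0 j (le_of_not_gt h), hvv0, smul_zero, if_neg h]
      _ = P := by rw [hPdef]; exact (Finset.sum_filter _ _).symm
  exact final
end

section
/- Let K be an N×N real symmetric positive semidefinite matrix with eigenvalues λ_1 ≥ λ_2 ≥ ⋯ ≥ λ_N ≥ 0 (counted with multiplicity), and let M be an N×N real symmetric positive semidefinite matrix with rank(M) ≤ k whose positive eigenvalues are μ_1 ≥ ⋯ ≥ μ_k ≥ 0 (padding with zeros if rank(M) < k). Then ‖K − M‖_F² ≥ Σ_{i=1}^k (μ_i − λ_i)² + Σ_{j=k+1}^N λ_j². -/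
open Matrix Finset

private lemma tele_aux (a : ℕ → ℝ) (i N : ℕ) (h : i ≤ N) :
    ∑ p ∈ Finset.Ico i N, (a p - a (p + 1)) = a i - a N := by
  rw [Finset.sum_Ico_eq_sum_range]
  have h2 : i + (N - i) = N := Nat.add_sub_cancel' h
  have := Finset.sum_range_sub' (fun j => a (i + j)) (N - i)
  simp only [Nat.add_succ] at this
  rw [this, Nat.add_zero, h2]

private lemma filter_range_eq_Ico (i N : ℕ) :
    (Finset.range N).filter (fun p => i ≤ p) = Finset.Ico i N := by
  ext p; simp [Finset.mem_Ico]; omega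

private lemma count_aux (m N : ℕ) (h : m < N) :
    ∑ i ∈ Finset.range N, (if i ≤ m then (1:ℝ) else 0) = (m : ℝ) + 1 := by
  have h1 : (Finset.range N).filter (fun i => i ≤ m) = Finset.range (m + 1) := by
    ext i; simp; omega
  rw [Finset.sum_boole, h1]
  simp

private lemma rearrange_key (N : ℕ) (a b : ℕ → ℝ) (S : ℕ → ℕ → ℝ)
    (ha : ∀ p, a (p + 1) ≤ a p) (haN : ∀ p, N ≤ p → a p = 0)
    (hb : ∀ p, b (p + 1) ≤ b p) (hbN : ∀ p, N ≤ p → b p = 0)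
    (hS : ∀ i j, 0 ≤ S i j)
    (hrow : ∀ i, i < N → ∑ j ∈ Finset.range N, S i j = 1)
    (hcol : ∀ j, j < N → ∑ i ∈ Finset.range N, S i j = 1) :
    ∑ i ∈ Finset.range N, ∑ j ∈ Finset.range N, S i j * (a i * b j)
      ≤ ∑ i ∈ Finset.range N, a i * b i := by
  have hΔa0 : ∀ p, 0 ≤ a p - a (p + 1) := fun p => sub_nonneg.2 (ha p)
  have hΔb0 : ∀ p, 0 ≤ b p - b (p + 1) := fun p => sub_nonneg.2 (hb p)
  have hav : ∀ i, i < N → a i = ∑ p ∈ Finset.Ico i N, (a p - a (p + 1)) := by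
    intro i hi
    rw [tele_aux a i N hi.le, haN N le_rfl, sub_zero]
  have hbv : ∀ j, j < N → b j = ∑ q ∈ Finset.Ico j N, (b q - b (q + 1)) := by
    intro j hj
    rw [tele_aux b j N hj.le, hbN N le_rfl, sub_zero]
  have hTle : ∀ p q, p < N → q < N →
      ∑ i ∈ Finset.range (p + 1), ∑ j ∈ Finset.range (q + 1), S i j
        ≤ ((min p q : ℕ) : ℝ) + 1 := by
    intro p q hp hq
    rcases le_total p q with h | h
    · rw [min_eq_left h]
      calc ∑ i ∈ Finset.range (p + 1), ∑ j ∈ Finset.range (q + 1), S i j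
          ≤ ∑ i ∈ Finset.range (p + 1), ∑ j ∈ Finset.range N, S i j :=
            Finset.sum_le_sum fun i _ => Finset.sum_le_sum_of_subset_of_nonneg
              (Finset.range_subset_range.2 hq) (fun j _ _ => hS i j)
        _ = ∑ i ∈ Finset.range (p + 1), (1:ℝ) := Finset.sum_congr rfl fun i hi =>
            hrow i (lt_of_lt_of_le (Finset.mem_range.1 hi) hp)
        _ = (p : ℝ) + 1 := by simp
    · rw [min_eq_right h]
      calc ∑ i ∈ Finset.range (p + 1), ∑ j ∈ Finset.range (q + 1), S i j
          = ∑ j ∈ Finset.range (q + 1), ∑ i ∈ Finset.range (p + 1), S i j := Finset.sum_comm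
        _ ≤ ∑ j ∈ Finset.range (q + 1), ∑ i ∈ Finset.range N, S i j :=
            Finset.sum_le_sum fun j _ => Finset.sum_le_sum_of_subset_of_nonneg
              (Finset.range_subset_range.2 hp) (fun i _ _ => hS i j)
        _ = ∑ j ∈ Finset.range (q + 1), (1:ℝ) := Finset.sum_congr rfl fun j hj =>
            hcol j (lt_of_lt_of_le (Finset.mem_range.1 hj) hq)
        _ = (q : ℝ) + 1 := by simp
  have hLHS : ∑ i ∈ Finset.range N, ∑ j ∈ Finset.range N, S i j * (a i * b j)
      = ∑ p ∈ Finset.range N, ∑ q ∈ Finset.range N,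
          (∑ i ∈ Finset.range (p + 1), ∑ j ∈ Finset.range (q + 1), S i j)
            * ((a p - a (p + 1)) * (b q - b (q + 1))) := by
    calc ∑ i ∈ Finset.range N, ∑ j ∈ Finset.range N, S i j * (a i * b j)
        = ∑ i ∈ Finset.range N, ∑ j ∈ Finset.range N, ∑ p ∈ Finset.Ico i N,
            ∑ q ∈ Finset.Ico j N, S i j * ((a p - a (p + 1)) * (b q - b (q + 1))) := by
          refine Finset.sum_congr rfl fun i hi => Finset.sum_congr rfl fun j hj => ?_
          rw [hav i (Finset.mem_range.1 hi), hbv j (Finset.mem_range.1 hj),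
            Finset.sum_mul_sum, Finset.mul_sum]
          exact Finset.sum_congr rfl fun p _ => by rw [Finset.mul_sum]
      _ = ∑ i ∈ Finset.range N, ∑ p ∈ Finset.Ico i N, ∑ j ∈ Finset.range N,
            ∑ q ∈ Finset.Ico j N, S i j * ((a p - a (p + 1)) * (b q - b (q + 1))) :=
          Finset.sum_congr rfl fun i _ => Finset.sum_comm
      _ = ∑ p ∈ Finset.range N, ∑ i ∈ Finset.range (p + 1), ∑ j ∈ Finset.range N,
            ∑ q ∈ Finset.Ico j N, S i j * ((a p - a (p + 1)) * (b q - b (q + 1))) := by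
          simp only [Finset.range_eq_Ico]
          exact Finset.sum_Ico_Ico_comm 0 N _
      _ = ∑ p ∈ Finset.range N, ∑ i ∈ Finset.range (p + 1), ∑ q ∈ Finset.range N,
            ∑ j ∈ Finset.range (q + 1), S i j * ((a p - a (p + 1)) * (b q - b (q + 1))) := by
          refine Finset.sum_congr rfl fun p _ => Finset.sum_congr rfl fun i _ => ?_
          simp only [Finset.range_eq_Ico]
          exact Finset.sum_Ico_Ico_comm 0 N _
      _ = ∑ p ∈ Finset.range N, ∑ q ∈ Finset.range N, ∑ i ∈ Finset.range (p + 1),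
            ∑ j ∈ Finset.range (q + 1), S i j * ((a p - a (p + 1)) * (b q - b (q + 1))) :=
          Finset.sum_congr rfl fun p _ => Finset.sum_comm
      _ = _ := by
          refine Finset.sum_congr rfl fun p _ => Finset.sum_congr rfl fun q _ => ?_
          rw [Finset.sum_mul]
          exact Finset.sum_congr rfl fun i _ => by rw [Finset.sum_mul]
  have hRHS : ∑ i ∈ Finset.range N, a i * b i
      = ∑ p ∈ Finset.range N, ∑ q ∈ Finset.range N,
          (((min p q : ℕ) : ℝ) + 1) * ((a p - a (p + 1)) * (b q - b (q + 1))) := by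
    calc ∑ i ∈ Finset.range N, a i * b i
        = ∑ i ∈ Finset.range N, ∑ p ∈ Finset.range N, ∑ q ∈ Finset.range N,
            (if i ≤ p then a p - a (p + 1) else 0) * (if i ≤ q then b q - b (q + 1) else 0) := by
          refine Finset.sum_congr rfl fun i hi => ?_
          rw [hav i (Finset.mem_range.1 hi), hbv i (Finset.mem_range.1 hi),
            ← filter_range_eq_Ico i N, Finset.sum_filter, Finset.sum_filter,
            Finset.sum_mul_sum]
      _ = ∑ p ∈ Finset.range N, ∑ q ∈ Finset.range N, ∑ i ∈ Finset.range N,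
            (if i ≤ p then a p - a (p + 1) else 0) * (if i ≤ q then b q - b (q + 1) else 0) := by
          rw [Finset.sum_comm]
          exact Finset.sum_congr rfl fun p _ => Finset.sum_comm
      _ = _ := by
          refine Finset.sum_congr rfl fun p hp => Finset.sum_congr rfl fun q hq => ?_
          have e : ∀ i, (if i ≤ p then a p - a (p + 1) else 0)
              * (if i ≤ q then b q - b (q + 1) else 0)
              = (if i ≤ min p q then (1:ℝ) else 0) * ((a p - a (p + 1)) * (b q - b (q + 1))) := by
            intro i
            by_cases h1 : i ≤ p <;> by_cases h2 : i ≤ q <;>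
              simp [h1, h2, le_min_iff]
          simp only [e]
          rw [← Finset.sum_mul, count_aux _ N
            (lt_of_le_of_lt (min_le_left p q) (Finset.mem_range.1 hp))]
  rw [hLHS, hRHS]
  refine Finset.sum_le_sum fun p hp => Finset.sum_le_sum fun q hq => ?_
  exact mul_le_mul_of_nonneg_right
    (hTle p q (Finset.mem_range.1 hp) (Finset.mem_range.1 hq))
    (mul_nonneg (hΔa0 p) (hΔb0 q))

private lemma trace_diag_conj {N : ℕ} (W : Matrix (Fin N) (Fin N) ℝ) (d e : Fin N → ℝ) :
    Matrix.trace (Matrix.diagonal d * W * Matrix.diagonal e * star W)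
      = ∑ i, ∑ j, d i * e j * (W i j)^2 := by
  simp only [Matrix.trace, Matrix.diag_apply, Matrix.mul_apply, Matrix.diagonal_apply,
    Matrix.star_apply, star_trivial, Finset.sum_mul, Finset.mul_sum,
    ite_mul, mul_ite, zero_mul, mul_zero, Finset.sum_ite_eq,
    Finset.sum_ite_eq', Finset.mem_univ, if_true]
  refine Finset.sum_congr rfl fun i _ => Finset.sum_congr rfl fun j _ => ?_
  ring

private lemma trace_conj_pair {N : ℕ} (U V : Matrix (Fin N) (Fin N) ℝ)
    (hU1 : U * star U = 1) (hU2 : star U * U = 1)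
    (d e : Fin N → ℝ) :
    Matrix.trace ((U * Matrix.diagonal d * star U) * (V * Matrix.diagonal e * star V))
      = ∑ i, ∑ j, d i * e j * ((star U * V) i j)^2 := by
  set W : Matrix (Fin N) (Fin N) ℝ := star U * V with hW
  have key : (U * Matrix.diagonal d * star U) * (V * Matrix.diagonal e * star V)
      = U * (Matrix.diagonal d * W * Matrix.diagonal e * star W) * star U := by
    simp only [hW, StarMul.star_mul, star_star, Matrix.mul_assoc]
    rw [hU1]
    simp [Matrix.mul_assoc]
  rw [key]
  have : Matrix.trace (U * (Matrix.diagonal d * W * Matrix.diagonal e * star W) * star U)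
      = Matrix.trace (Matrix.diagonal d * W * Matrix.diagonal e * star W) := by
    rw [Matrix.trace_mul_comm, ← Matrix.mul_assoc, hU2, Matrix.one_mul]
  rw [this, trace_diag_conj]

private lemma trace_conj_sq {N : ℕ} (U : Matrix (Fin N) (Fin N) ℝ)
    (hU1 : U * star U = 1) (hU2 : star U * U = 1) (d : Fin N → ℝ) :
    Matrix.trace ((U * Matrix.diagonal d * star U) * (U * Matrix.diagonal d * star U))
      = ∑ i, (d i)^2 := by
  rw [trace_conj_pair U U hU1 hU2 d d]
  have : ∀ i j : Fin N, d i * d j * ((star U * U) i j)^2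
      = d i * d j * ((1 : Matrix (Fin N) (Fin N) ℝ) i j)^2 := by
    intro i j; rw [hU2]
  simp only [this, Matrix.one_apply]
  refine Finset.sum_congr rfl fun i _ => ?_
  rw [Finset.sum_eq_single i]
  · simp [pow_two]
  · intro j _ hj; simp [Ne.symm hj]
  · simp

/-- **Lower bound on the Frobenius approximation error.**
Let `K` be an `N×N` real symmetric PSD matrix with eigenvalues `lam` listed in
decreasing order (with multiplicity), and let `M` be an `N×N` real symmetric
PSD matrix with `rank(M) ≤ k`, whose eigenvalues `mu` are listed in decreasing
order (with multiplicity); since `M` is PSD of rank at most `k`, the first `k`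
entries of `mu` are its positive eigenvalues padded with zeros. Then
`‖K − M‖_F² ≥ ∑_{i=1}^k (μ_i − λ_i)² + ∑_{j=k+1}^N λ_j²`. -/
theorem frobSq_sub_lower_bound {N k : ℕ} (hkN : k ≤ N)
    (K M : Matrix (Fin N) (Fin N) ℝ)
    (hK : K.PosSemidef) (hM : M.PosSemidef) (hMrank : M.rank ≤ k)
    (lam mu : Fin N → ℝ)
    (hKenum : ∃ σ : Equiv.Perm (Fin N), lam = hK.1.eigenvalues ∘ σ)
    (hMenum : ∃ σ : Equiv.Perm (Fin N), mu = hM.1.eigenvalues ∘ σ)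
    (hlmono : ∀ i j : Fin N, i ≤ j → lam j ≤ lam i)
    (hmmono : ∀ i j : Fin N, i ≤ j → mu j ≤ mu i) :
    ∑ i ∈ Finset.univ.filter (fun i : Fin N => (i : ℕ) < k), (mu i - lam i) ^ 2
      + ∑ j ∈ Finset.univ.filter (fun j : Fin N => k ≤ (j : ℕ)), (lam j) ^ 2
      ≤ frobSq (K - M) := by
  obtain ⟨σ, hσ⟩ := hKenum
  obtain ⟨τ, hτ⟩ := hMenum
  set d : Fin N → ℝ := hK.1.eigenvalues with hd
  set e : Fin N → ℝ := hM.1.eigenvalues with he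
  have hlam : ∀ i, lam i = d (σ i) := fun i => congrFun hσ i
  have hmu : ∀ i, mu i = e (τ i) := fun i => congrFun hτ i
  have hlam0 : ∀ i, 0 ≤ lam i := fun i => (hlam i).symm ▸ hK.eigenvalues_nonneg (σ i)
  have hmu0 : ∀ i, 0 ≤ mu i := fun i => (hmu i).symm ▸ hM.eigenvalues_nonneg (τ i)
  set U : Matrix (Fin N) (Fin N) ℝ := (hK.1.eigenvectorUnitary : Matrix (Fin N) (Fin N) ℝ) with hUdef
  set V : Matrix (Fin N) (Fin N) ℝ := (hM.1.eigenvectorUnitary : Matrix (Fin N) (Fin N) ℝ) with hVdef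
  have hU1 : U * star U = 1 := Matrix.mem_unitaryGroup_iff.mp hK.1.eigenvectorUnitary.2
  have hU2 : star U * U = 1 := Matrix.mem_unitaryGroup_iff'.mp hK.1.eigenvectorUnitary.2
  have hV1 : V * star V = 1 := Matrix.mem_unitaryGroup_iff.mp hM.1.eigenvectorUnitary.2
  have hV2 : star V * V = 1 := Matrix.mem_unitaryGroup_iff'.mp hM.1.eigenvectorUnitary.2
  have hKspec : K = U * Matrix.diagonal d * star U := by
    have := hK.1.spectral_theorem
    rwa [RCLike.ofReal_real_eq_id, Function.id_comp] at this
  have hMspec : M = V * Matrix.diagonal e * star V := by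
    have := hM.1.spectral_theorem
    rwa [RCLike.ofReal_real_eq_id, Function.id_comp] at this
  set W : Matrix (Fin N) (Fin N) ℝ := star U * V with hWdef
  have hW1 : W * star W = 1 := by
    calc W * star W = star U * (V * star V) * U := by
          simp only [hWdef, StarMul.star_mul, star_star, Matrix.mul_assoc]
      _ = 1 := by rw [hV1, Matrix.mul_one, hU2]
  have hW2 : star W * W = 1 := by
    calc star W * W = star V * (U * star U) * V := by
          simp only [hWdef, StarMul.star_mul, star_star, Matrix.mul_assoc]
      _ = 1 := by rw [hU1, Matrix.mul_one, hV2]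
  have hWrow : ∀ i : Fin N, ∑ j, (W i j)^2 = 1 := by
    intro i
    have h := congrFun (congrFun hW1 i) i
    simp only [Matrix.mul_apply, Matrix.star_apply, star_trivial, Matrix.one_apply_eq] at h
    rw [← h]
    exact Finset.sum_congr rfl fun j _ => by ring
  have hWcol : ∀ j : Fin N, ∑ i, (W i j)^2 = 1 := by
    intro j
    have h := congrFun (congrFun hW2 j) j
    simp only [Matrix.mul_apply, Matrix.star_apply, star_trivial, Matrix.one_apply_eq] at h
    rw [← h]
    exact Finset.sum_congr rfl fun i _ => by ring
  have tK2 : Matrix.trace (K * K) = ∑ i, (lam i)^2 := by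
    rw [hKspec, trace_conj_sq U hU1 hU2 d]
    rw [← Equiv.sum_comp σ (fun i => (d i)^2)]
    exact Finset.sum_congr rfl fun i _ => by rw [hlam i]
  have tM2 : Matrix.trace (M * M) = ∑ i, (mu i)^2 := by
    rw [hMspec, trace_conj_sq V hV1 hV2 e]
    rw [← Equiv.sum_comp τ (fun i => (e i)^2)]
    exact Finset.sum_congr rfl fun i _ => by rw [hmu i]
  have tKM : Matrix.trace (K * M) = ∑ i, ∑ j, lam i * mu j * (W (σ i) (τ j))^2 := by
    rw [hKspec, hMspec, trace_conj_pair U V hU1 hU2 d e]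
    rw [← Equiv.sum_comp σ (fun i => ∑ j, d i * e j * (W i j)^2)]
    refine Finset.sum_congr rfl fun i _ => ?_
    rw [← Equiv.sum_comp τ (fun j => d (σ i) * e j * (W (σ i) j)^2)]
    exact Finset.sum_congr rfl fun j _ => by rw [hlam i, hmu j]
  have hKM : (K - M).IsHermitian := hK.1.sub hM.1
  have hfrob : frobSq (K - M)
      = Matrix.trace (K * K) - 2 * Matrix.trace (K * M) + Matrix.trace (M * M) := by
    have h1 : frobSq (K - M) = Matrix.trace ((K - M) * (K - M)) := by
      simp only [frobSq, Matrix.trace, Matrix.diag_apply, Matrix.mul_apply]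
      refine Finset.sum_congr rfl fun i _ => Finset.sum_congr rfl fun j _ => ?_
      have := hKM.apply j i
      rw [star_trivial] at this
      rw [pow_two, ← this]
    rw [h1, Matrix.sub_mul, Matrix.mul_sub, Matrix.mul_sub, Matrix.trace_sub,
      Matrix.trace_sub, Matrix.trace_sub, Matrix.trace_mul_comm M K]
    ring
  set a : ℕ → ℝ := fun p => if h : p < N then lam ⟨p, h⟩ else 0 with hadef
  set b : ℕ → ℝ := fun p => if h : p < N then mu ⟨p, h⟩ else 0 with hbdef
  set S : ℕ → ℕ → ℝ := fun p q =>
    if h : p < N ∧ q < N then (W (σ ⟨p, h.1⟩) (τ ⟨q, h.2⟩))^2 else 0 with hSdef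
  have hbound : ∑ i, ∑ j, lam i * mu j * (W (σ i) (τ j))^2 ≤ ∑ i, lam i * mu i := by
    have ha : ∀ p, a (p + 1) ≤ a p := by
      intro p
      by_cases h1 : p + 1 < N
      · have h0 : p < N := Nat.lt_of_succ_lt h1
        simp only [hadef, dif_pos h1, dif_pos h0]
        exact hlmono ⟨p, h0⟩ ⟨p + 1, h1⟩ (by simp [Fin.le_def])
      · by_cases h0 : p < N
        · simp only [hadef, dif_neg h1, dif_pos h0]
          exact hlam0 _
        · simp [hadef, dif_neg h1, dif_neg h0]
    have hb : ∀ p, b (p + 1) ≤ b p := by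
      intro p
      by_cases h1 : p + 1 < N
      · have h0 : p < N := Nat.lt_of_succ_lt h1
        simp only [hbdef, dif_pos h1, dif_pos h0]
        exact hmmono ⟨p, h0⟩ ⟨p + 1, h1⟩ (by simp [Fin.le_def])
      · by_cases h0 : p < N
        · simp only [hbdef, dif_neg h1, dif_pos h0]
          exact hmu0 _
        · simp [hbdef, dif_neg h1, dif_neg h0]
    have haN : ∀ p, N ≤ p → a p = 0 := fun p hp => by
      simp [hadef, dif_neg (not_lt.2 hp)]
    have hbN : ∀ p, N ≤ p → b p = 0 := fun p hp => by
      simp [hbdef, dif_neg (not_lt.2 hp)]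
    have hS0 : ∀ i j, 0 ≤ S i j := by
      intro i j
      by_cases h : i < N ∧ j < N
      · simp only [hSdef, dif_pos h]; positivity
      · simp [hSdef, dif_neg h]
    have hrow : ∀ i, i < N → ∑ j ∈ Finset.range N, S i j = 1 := by
      intro i hi
      rw [← Fin.sum_univ_eq_sum_range (fun j => S i j) N]
      have hj : ∀ j : Fin N, S i (j : ℕ) = (W (σ ⟨i, hi⟩) (τ j))^2 := by
        intro j
        simp only [hSdef, dif_pos (⟨hi, j.2⟩ : i < N ∧ (j:ℕ) < N)]
      rw [Finset.sum_congr rfl fun j _ => hj j]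
      rw [Equiv.sum_comp τ (fun j => (W (σ ⟨i, hi⟩) j)^2)]
      exact hWrow _
    have hcol : ∀ j, j < N → ∑ i ∈ Finset.range N, S i j = 1 := by
      intro j hj
      rw [← Fin.sum_univ_eq_sum_range (fun i => S i j) N]
      have hi : ∀ i : Fin N, S (i : ℕ) j = (W (σ i) (τ ⟨j, hj⟩))^2 := by
        intro i
        simp only [hSdef, dif_pos (⟨i.2, hj⟩ : (i:ℕ) < N ∧ j < N)]
      rw [Finset.sum_congr rfl fun i _ => hi i]
      rw [Equiv.sum_comp σ (fun i => (W i (τ ⟨j, hj⟩))^2)]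
      exact hWcol _
    have key := rearrange_key N a b S ha haN hb hbN hS0 hrow hcol
    have eL : ∑ i ∈ Finset.range N, ∑ j ∈ Finset.range N, S i j * (a i * b j)
        = ∑ i, ∑ j, lam i * mu j * (W (σ i) (τ j))^2 := by
      rw [← Fin.sum_univ_eq_sum_range (fun i => ∑ j ∈ Finset.range N, S i j * (a i * b j)) N]
      refine Finset.sum_congr rfl fun i _ => ?_
      rw [← Fin.sum_univ_eq_sum_range (fun j => S (i:ℕ) j * (a (i:ℕ) * b (j:ℕ))) N]
      refine Finset.sum_congr rfl fun j _ => ?_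
      simp only [hSdef, hadef, hbdef, dif_pos (⟨i.2, j.2⟩ : (i:ℕ) < N ∧ (j:ℕ) < N),
        dif_pos i.2, dif_pos j.2, Fin.eta]
      ring
    have eR : ∑ i ∈ Finset.range N, a i * b i = ∑ i, lam i * mu i := by
      rw [← Fin.sum_univ_eq_sum_range (fun i => a i * b i) N]
      refine Finset.sum_congr rfl fun i _ => ?_
      simp only [hadef, hbdef, dif_pos i.2, Fin.eta]
    rw [eL, eR] at key
    exact key
  have hmuzero : ∀ j : Fin N, k ≤ (j : ℕ) → mu j = 0 := by
    intro j hj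
    by_contra hne
    have hcard : Fintype.card {i // e i ≠ 0} ≤ k := by
      rw [hM.1.rank_eq_card_non_zero_eigs] at hMrank
      exact hMrank
    have hequiv : Fintype.card {i : Fin N // mu i ≠ 0} = Fintype.card {i : Fin N // e i ≠ 0} :=
      Fintype.card_congr (Equiv.subtypeEquiv τ (fun i => by rw [hmu i]))
    have hsub : (Finset.Iic j) ⊆ Finset.univ.filter (fun i : Fin N => mu i ≠ 0) := by
      intro i hi
      simp only [Finset.mem_filter, Finset.mem_univ, true_and]
      intro h0
      have h2 : mu j ≤ mu i := hmmono i j (Finset.mem_Iic.1 hi)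
      have h3 : mu j ≤ 0 := h0 ▸ h2
      exact hne (le_antisymm h3 (hmu0 j))
    have h1 : (j : ℕ) + 1 ≤ Fintype.card {i : Fin N // mu i ≠ 0} := by
      rw [Fintype.card_subtype]
      calc (j : ℕ) + 1 = (Finset.Iic j).card := (Fin.card_Iic j).symm
        _ ≤ _ := Finset.card_le_card hsub
    have : (j : ℕ) + 1 ≤ k := le_trans (h1.trans_eq hequiv) hcard
    omega
  have hsplit : ∑ i ∈ Finset.univ.filter (fun i : Fin N => (i : ℕ) < k), (mu i - lam i) ^ 2
      + ∑ j ∈ Finset.univ.filter (fun j : Fin N => k ≤ (j : ℕ)), (lam j) ^ 2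
      = ∑ i : Fin N, (lam i - mu i)^2 := by
    rw [← Finset.sum_filter_add_sum_filter_not Finset.univ (fun i : Fin N => (i : ℕ) < k)
      (fun i => (lam i - mu i)^2)]
    congr 1
    · exact Finset.sum_congr rfl fun i _ => by ring
    · refine Finset.sum_congr ?_ fun j hj => ?_
      · exact Finset.filter_congr fun i _ => by simp [not_lt]
      · have hk : k ≤ (j : ℕ) := by
          simp only [Finset.mem_filter] at hj
          exact not_lt.1 hj.2
        rw [hmuzero j hk, sub_zero]
  have hexp : ∑ i : Fin N, (lam i - mu i)^2
      = ∑ i, (lam i)^2 - 2 * ∑ i, lam i * mu i + ∑ i, (mu i)^2 := by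
    rw [Finset.mul_sum, ← Finset.sum_sub_distrib, ← Finset.sum_add_distrib]
    exact Finset.sum_congr rfl fun i _ => by ring
  rw [hsplit, hfrob, tK2, tM2, tKM, hexp]
  linarith [hbound]
end

section
/- Let F : ℝ^m × ℝ → ℝ be twice continuously differentiable, let η₀ ∈ ℝ, and let x₀ ∈ ℝ^m satisfy ∇ₓF(x₀, η₀) = 0 with the Hessian ∇ₓ²F(x₀, η₀) positive definite. Then there exist an open interval U containing η₀ and a continuously differentiable map x* : U → ℝ^m with x*(η₀) = x₀ such that, for every η ∈ U: (a) ∇ₓF(x*(η), η) = 0; (b) ∇ₓ²F(x*(η), η) is positive definite; and (c) x*(η) is a strict local minimum of x ↦ F(x, η). -/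
open Filter Topology ContinuousLinearMap

section Auxiliary

variable {m : ℕ}

noncomputable def Dp (F : (Fin m → ℝ) × ℝ → ℝ) : (Fin m → ℝ) × ℝ → ((Fin m → ℝ) →L[ℝ] ℝ) :=
  fun p => (fderiv ℝ F p).comp (ContinuousLinearMap.inl ℝ (Fin m → ℝ) ℝ)

noncomputable def Hp (F : (Fin m → ℝ) × ℝ → ℝ) :
    (Fin m → ℝ) × ℝ → ((Fin m → ℝ) →L[ℝ] ((Fin m → ℝ) →L[ℝ] ℝ)) :=
  fun p => (fderiv ℝ (Dp F) p).comp (ContinuousLinearMap.inl ℝ (Fin m → ℝ) ℝ)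

theorem hasFDerivAt_partial (F : (Fin m → ℝ) × ℝ → ℝ) (hF : ContDiff ℝ 2 F) (x : Fin m → ℝ) (η : ℝ) :
    HasFDerivAt (fun y => F (y, η)) (Dp F (x, η)) x :=
  ((hF.differentiable (by norm_num) (x, η)).hasFDerivAt).comp x (hasFDerivAt_prodMk_left x η)

theorem fderiv_partial (F : (Fin m → ℝ) × ℝ → ℝ) (hF : ContDiff ℝ 2 F) (x : Fin m → ℝ) (η : ℝ) :
    fderiv ℝ (fun y => F (y, η)) x = Dp F (x, η) :=
  (hasFDerivAt_partial F hF x η).fderiv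

theorem contDiff_Dp (F : (Fin m → ℝ) × ℝ → ℝ) (hF : ContDiff ℝ 2 F) : ContDiff ℝ 1 (Dp F) :=
  (hF.fderiv_right (by norm_num)).clm_comp contDiff_const

theorem hasFDerivAt_partial2 (F : (Fin m → ℝ) × ℝ → ℝ) (hF : ContDiff ℝ 2 F) (x : Fin m → ℝ) (η : ℝ) :
    HasFDerivAt (fun y => Dp F (y, η)) (Hp F (x, η)) x := by
  have := (((contDiff_Dp F hF).differentiable one_ne_zero (x, η)).hasFDerivAt).comp x
    (hasFDerivAt_prodMk_left (𝕜 := ℝ) x η)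
  exact this

theorem hess_eq (F : (Fin m → ℝ) × ℝ → ℝ) (hF : ContDiff ℝ 2 F) (x : Fin m → ℝ) (η : ℝ) :
    fderiv ℝ (fun y => fderiv ℝ (fun z => F (z, η)) y) x = Hp F (x, η) := by
  have h : (fun y => fderiv ℝ (fun z => F (z, η)) y) = fun y => Dp F (y, η) := by
    funext y; exact fderiv_partial F hF y η
  rw [h]
  exact (hasFDerivAt_partial2 F hF x η).fderiv

theorem continuous_Hp (F : (Fin m → ℝ) × ℝ → ℝ) (hF : ContDiff ℝ 2 F) : Continuous (Hp F) :=
  ((contDiff_Dp F hF).continuous_fderiv one_ne_zero).clm_comp continuous_const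

theorem pd_nhds (F : (Fin m → ℝ) × ℝ → ℝ) (hF : ContDiff ℝ 2 F) {p₀ : (Fin m → ℝ) × ℝ}
    (hpd : ∀ v : Fin m → ℝ, v ≠ 0 → 0 < Hp F p₀ v v) :
    ∀ᶠ p in 𝓝 p₀, ∀ v : Fin m → ℝ, v ≠ 0 → 0 < Hp F p v v := by
  have hc : Continuous fun q : ((Fin m → ℝ) × ℝ) × (Fin m → ℝ) => Hp F q.1 q.2 q.2 :=
    ((((continuous_Hp F hF).comp continuous_fst).clm_apply continuous_snd).clm_apply continuous_snd)
  have hS : ∀ᶠ p in 𝓝 p₀, ∀ v ∈ Metric.sphere (0 : Fin m → ℝ) 1, 0 < Hp F p v v := by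
    apply (isCompact_sphere (0 : Fin m → ℝ) 1).eventually_forall_of_forall_eventually
    intro v hv
    have hv1 : ‖v‖ = 1 := by simpa using hv
    have hvne : v ≠ 0 := by intro h; rw [h] at hv1; simp at hv1
    have hopen : IsOpen {q : ((Fin m → ℝ) × ℝ) × (Fin m → ℝ) | 0 < Hp F q.1 q.2 q.2} :=
      isOpen_lt continuous_const hc
    exact hopen.mem_nhds (hpd v hvne)
  refine hS.mono fun p hp v hv => ?_
  have hnv : 0 < ‖v‖ := norm_pos_iff.mpr hv
  have hus : (‖v‖⁻¹ • v) ∈ Metric.sphere (0 : Fin m → ℝ) 1 := by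
    simp [norm_smul, abs_of_nonneg (inv_nonneg.mpr hnv.le), inv_mul_cancel₀ hnv.ne']
  have hpos := hp _ hus
  have key : Hp F p (‖v‖⁻¹ • v) (‖v‖⁻¹ • v) = ‖v‖⁻¹ * (‖v‖⁻¹ * (Hp F p v v)) := by
    simp only [map_smul, ContinuousLinearMap.smul_apply, smul_eq_mul]
  rw [key] at hpos
  have hinv : 0 < ‖v‖⁻¹ := inv_pos.mpr hnv
  have h2 : 0 < ‖v‖⁻¹ * (Hp F p v v) := (mul_pos_iff_of_pos_left hinv).mp hpos
  exact (mul_pos_iff_of_pos_left hinv).mp h2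

theorem strict_min (F : (Fin m → ℝ) × ℝ → ℝ) (hF : ContDiff ℝ 2 F) {η : ℝ} {c : Fin m → ℝ}
    {r : ℝ} (hc0 : Dp F (c, η) = 0)
    (hball : ∀ x ∈ Metric.ball c r, ∀ v : Fin m → ℝ, v ≠ 0 → 0 < Hp F (x, η) v v) :
    ∀ x ∈ Metric.ball c r, x ≠ c → F (c, η) < F (x, η) := by
  intro x hx hne
  set v : Fin m → ℝ := x - c with hv
  have hvne : v ≠ 0 := sub_ne_zero.mpr hne
  set L : ℝ → (Fin m → ℝ) := fun t => c + t • v with hLdef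
  have hL : ∀ t : ℝ, HasDerivAt L v t := by
    intro t
    simpa [hLdef] using ((hasDerivAt_id t).smul_const v).const_add c
  have hLmem : ∀ t ∈ Set.Icc (0:ℝ) 1, L t ∈ Metric.ball c r := by
    intro t ht
    have hxc : dist x c < r := Metric.mem_ball.mp hx
    have : dist (L t) c = |t| * ‖v‖ := by
      simp [hLdef, dist_eq_norm, norm_smul, abs_of_nonneg ht.1]
    rw [Metric.mem_ball, this, abs_of_nonneg ht.1]
    calc t * ‖v‖ ≤ 1 * ‖v‖ := by
          apply mul_le_mul_of_nonneg_right ht.2 (norm_nonneg v)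
      _ = dist x c := by rw [one_mul, hv, dist_eq_norm]
      _ < r := hxc
  set φ : ℝ → ℝ := fun t => Dp F (L t, η) v with hφdef
  have hφd : ∀ t : ℝ, HasDerivAt φ (Hp F (L t, η) v v) t := by
    intro t
    have h1 : HasDerivAt (fun t : ℝ => (L t, η)) (v, (0:ℝ)) t :=
      (hL t).prodMk (hasDerivAt_const t η)
    have h2 : HasFDerivAt (Dp F) (fderiv ℝ (Dp F) (L t, η)) (L t, η) :=
      ((contDiff_Dp F hF).differentiable one_ne_zero (L t, η)).hasFDerivAt
    have h3 : HasDerivAt (fun s : ℝ => Dp F (L s, η)) (fderiv ℝ (Dp F) (L t, η) (v, 0)) t :=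
      by have := h2.comp_hasDerivAt t h1; exact this
    have h4 := ((ContinuousLinearMap.apply ℝ ℝ v).hasFDerivAt).comp_hasDerivAt t h3
    have heq : (ContinuousLinearMap.apply ℝ ℝ v) (fderiv ℝ (Dp F) (L t, η) (v, 0))
        = Hp F (L t, η) v v := rfl
    rw [heq] at h4
    exact h4
  have hφ0 : φ 0 = 0 := by simp [hφdef, hLdef, hc0]
  set g1 : ℝ → ℝ := fun t => F (L t, η) with hg1def
  have hg1d : ∀ t : ℝ, HasDerivAt g1 (φ t) t := by
    intro t
    exact (hasFDerivAt_partial F hF (L t) η).comp_hasDerivAt t (hL t)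
  have hφc : Continuous φ := by
    apply continuous_iff_continuousAt.mpr
    exact fun t => (hφd t).continuousAt
  have hφmono : StrictMonoOn φ (Set.Icc 0 1) := by
    apply strictMonoOn_of_deriv_pos (convex_Icc 0 1) (hφc.continuousOn)
    intro t ht
    rw [interior_Icc] at ht
    rw [(hφd t).deriv]
    exact hball _ (hLmem t ⟨ht.1.le, ht.2.le⟩) v hvne
  have hφpos : ∀ t ∈ Set.Ioo (0:ℝ) 1, 0 < φ t := by
    intro t ht
    have := hφmono (Set.mem_Icc.mpr ⟨le_rfl, zero_le_one⟩)
      (Set.mem_Icc.mpr ⟨ht.1.le, ht.2.le⟩) ht.1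
    rwa [hφ0] at this
  have hg1c : Continuous g1 := by
    apply continuous_iff_continuousAt.mpr
    exact fun t => (hg1d t).continuousAt
  have hg1mono : StrictMonoOn g1 (Set.Icc 0 1) := by
    apply strictMonoOn_of_deriv_pos (convex_Icc 0 1) (hg1c.continuousOn)
    intro t ht
    rw [interior_Icc] at ht
    rw [(hg1d t).deriv]
    exact hφpos t ht
  have hfin := hg1mono (Set.mem_Icc.mpr ⟨le_rfl, zero_le_one⟩)
    (Set.mem_Icc.mpr ⟨zero_le_one, le_rfl⟩) zero_lt_one
  have e0 : g1 0 = F (c, η) := by simp [hg1def, hLdef]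
  have e1 : g1 1 = F (x, η) := by simp [hg1def, hLdef, hv, add_sub_cancel]
  rwa [e0, e1] at hfin

end Auxiliary

/-- **A `C¹` branch of nondegenerate local minima.**
Let `F : ℝ^m × ℝ → ℝ` be twice continuously differentiable, and suppose
`x₀` is a critical point of `x ↦ F(x, η₀)` whose Hessian (second derivative
bilinear form in `x`) at `(x₀, η₀)` is positive definite. Then there is an
open interval `U = (a, b)` containing `η₀` and a continuously differentiable
map `x* : U → ℝ^m` with `x*(η₀) = x₀` such that for every `η ∈ U`:
(a) `∇ₓF(x*(η), η) = 0`; (b) the Hessian of `x ↦ F(x, η)` at `x*(η)` is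
positive definite; and (c) `x*(η)` is a strict local minimum of
`x ↦ F(x, η)`. -/
theorem branch_of_strict_local_minima {m : ℕ}
    (F : (Fin m → ℝ) × ℝ → ℝ) (hF : ContDiff ℝ 2 F)
    (η₀ : ℝ) (x₀ : Fin m → ℝ)
    (hcrit : fderiv ℝ (fun y => F (y, η₀)) x₀ = 0)
    (hpd : ∀ v : Fin m → ℝ, v ≠ 0 →
      0 < fderiv ℝ (fun y => fderiv ℝ (fun z => F (z, η₀)) y) x₀ v v) :
    ∃ (a b : ℝ) (xs : ℝ → (Fin m → ℝ)),
      a < η₀ ∧ η₀ < b ∧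
      ContDiffOn ℝ 1 xs (Set.Ioo a b) ∧
      xs η₀ = x₀ ∧
      ∀ η ∈ Set.Ioo a b,
        (fderiv ℝ (fun y => F (y, η)) (xs η) = 0) ∧
        (∀ v : Fin m → ℝ, v ≠ 0 →
          0 < fderiv ℝ (fun y => fderiv ℝ (fun z => F (z, η)) y) (xs η) v v) ∧
        (∃ V ∈ 𝓝 (xs η), ∀ x ∈ V, x ≠ xs η → F (xs η, η) < F (x, η)) := by
  classical
  have hD0 : Dp F (x₀, η₀) = 0 := by
    rw [← fderiv_partial F hF x₀ η₀]; exact hcrit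
  have hpd' : ∀ v : Fin m → ℝ, v ≠ 0 → 0 < Hp F (x₀, η₀) v v := by
    intro v hv
    have := hpd v hv
    rwa [hess_eq F hF x₀ η₀] at this
  set Φ : (Fin m → ℝ) × ℝ → ((Fin m → ℝ) →L[ℝ] ℝ) × ℝ := fun p => (Dp F p, p.2) with hΦdef
  have hΦ : ContDiff ℝ 1 Φ := (contDiff_Dp F hF).prodMk contDiff_snd
  set B : ((Fin m → ℝ) × ℝ) →L[ℝ] (((Fin m → ℝ) →L[ℝ] ℝ) × ℝ) :=
    (fderiv ℝ (Dp F) (x₀, η₀)).prod (ContinuousLinearMap.snd ℝ (Fin m → ℝ) ℝ) with hBdef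
  have hB : HasFDerivAt Φ B (x₀, η₀) :=
    (((contDiff_Dp F hF).differentiable one_ne_zero (x₀, η₀)).hasFDerivAt).prodMk hasFDerivAt_snd
  have hker : ∀ z : (Fin m → ℝ) × ℝ, B z = 0 → z = 0 := by
    rintro ⟨v, t⟩ hz
    have h1 : fderiv ℝ (Dp F) (x₀, η₀) (v, t) = 0 ∧ t = 0 := by
      simpa [hBdef, Prod.ext_iff] using hz
    obtain ⟨h2, rfl⟩ := h1
    have h3 : Hp F (x₀, η₀) v = 0 := by
      show (fderiv ℝ (Dp F) (x₀, η₀)).comp (ContinuousLinearMap.inl ℝ (Fin m → ℝ) ℝ) v = 0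
      simpa using h2
    have hv0 : v = 0 := by
      by_contra hv
      have := hpd' v hv
      rw [h3] at this
      simp at this
    simp [hv0]
  have hinj : Function.Injective B := by
    intro a b hab
    have h0 : B (a - b) = 0 := by rw [map_sub, hab, sub_self]
    have := hker _ h0
    exact sub_eq_zero.mp this
  have hdim : Module.finrank ℝ ((Fin m → ℝ) × ℝ)
      = Module.finrank ℝ (((Fin m → ℝ) →L[ℝ] ℝ) × ℝ) := by
    have h1 : Module.finrank ℝ ((Fin m → ℝ) →L[ℝ] ℝ) = m := by
      rw [← (LinearMap.toContinuousLinearMap :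
        ((Fin m → ℝ) →ₗ[ℝ] ℝ) ≃ₗ[ℝ] ((Fin m → ℝ) →L[ℝ] ℝ)).finrank_eq]
      rw [Module.finrank_linearMap, Module.finrank_fin_fun, Module.finrank_self, mul_one]
    simp [Module.finrank_prod, h1, Module.finrank_fin_fun, Module.finrank_self]
  set A : ((Fin m → ℝ) × ℝ) ≃L[ℝ] (((Fin m → ℝ) →L[ℝ] ℝ) × ℝ) :=
    ((B : ((Fin m → ℝ) × ℝ) →ₗ[ℝ] (((Fin m → ℝ) →L[ℝ] ℝ) × ℝ)).linearEquivOfInjective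
      hinj hdim).toContinuousLinearEquiv with hAdef
  have hAB : (A : ((Fin m → ℝ) × ℝ) →L[ℝ] (((Fin m → ℝ) →L[ℝ] ℝ) × ℝ)) = B := by
    apply ContinuousLinearMap.ext
    intro z
    rfl
  have hA : HasFDerivAt Φ (A : ((Fin m → ℝ) × ℝ) →L[ℝ] (((Fin m → ℝ) →L[ℝ] ℝ) × ℝ)) (x₀, η₀) := by
    rw [hAB]; exact hB
  have hS : HasStrictFDerivAt Φ
      (A : ((Fin m → ℝ) × ℝ) →L[ℝ] (((Fin m → ℝ) →L[ℝ] ℝ) × ℝ)) (x₀, η₀) :=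
    hΦ.contDiffAt.hasStrictFDerivAt' hA one_ne_zero
  set g := hS.localInverse Φ A (x₀, η₀) with hgdef
  have hgc : ContDiffAt ℝ 1 g (Φ (x₀, η₀)) := hΦ.contDiffAt.to_localInverse hA one_ne_zero
  have hΦp₀ : Φ (x₀, η₀) = (0, η₀) := by simp [hΦdef, hD0]
  have hg0 : g (0, η₀) = (x₀, η₀) := by rw [← hΦp₀]; exact hS.localInverse_apply_image
  have hri : ∀ᶠ y in 𝓝 (Φ (x₀, η₀)), Φ (g y) = y := hS.eventually_right_inverse
  have hy : Filter.Tendsto (fun η : ℝ => ((0 : (Fin m → ℝ) →L[ℝ] ℝ), η)) (𝓝 η₀)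
      (𝓝 (Φ (x₀, η₀))) := by
    rw [hΦp₀]
    exact tendsto_const_nhds.prodMk_nhds tendsto_id
  have e1 : ∀ᶠ η in 𝓝 η₀, Φ (g ((0 : (Fin m → ℝ) →L[ℝ] ℝ), η))
      = ((0 : (Fin m → ℝ) →L[ℝ] ℝ), η) := hy.eventually hri
  have hγ : ContDiffAt ℝ 1 (fun η : ℝ => g ((0 : (Fin m → ℝ) →L[ℝ] ℝ), η)) η₀ := by
    have h1 : ContDiffAt ℝ 1 (fun η : ℝ => ((0 : (Fin m → ℝ) →L[ℝ] ℝ), η)) η₀ :=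
      (contDiff_const.prodMk contDiff_id).contDiffAt
    have h2 : ContDiffAt ℝ 1 g ((0 : (Fin m → ℝ) →L[ℝ] ℝ), η₀) := by
      rw [← hΦp₀]; exact hgc
    exact h2.comp η₀ h1
  set xs : ℝ → (Fin m → ℝ) := fun η => (g ((0 : (Fin m → ℝ) →L[ℝ] ℝ), η)).1 with hxsdef
  have hxs₀ : xs η₀ = x₀ := by rw [hxsdef]; simp only [hg0]
  have hxsc : ContDiffAt ℝ 1 xs η₀ := contDiff_fst.contDiffAt.comp η₀ hγ
  obtain ⟨u, hu, hcdu⟩ := hxsc.contDiffOn le_rfl (by simp)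
  obtain ⟨O, hOsub, hOopen, hOmem⟩ := mem_nhds_iff.mp (pd_nhds F hF hpd')
  have hten : Filter.Tendsto (fun η => ((xs η), η)) (𝓝 η₀) (𝓝 (x₀, η₀)) := by
    have h2 : Filter.Tendsto xs (𝓝 η₀) (𝓝 x₀) := by
      rw [← hxs₀]; exact hxsc.continuousAt
    exact h2.prodMk_nhds tendsto_id
  have e2 : ∀ᶠ η in 𝓝 η₀, ((xs η), η) ∈ O := hten.eventually (hOopen.eventually_mem hOmem)
  have e3 : ∀ᶠ η in 𝓝 η₀, η ∈ u := hu
  have hall := e1.and (e2.and e3)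
  obtain ⟨⟨a, b⟩, ⟨hab1, hab2⟩, hsub⟩ := (nhds_basis_Ioo η₀).mem_iff.mp hall
  refine ⟨a, b, xs, hab1, hab2, hcdu.mono (fun η hη => (hsub hη).2.2), hxs₀, ?_⟩
  intro η hη
  obtain ⟨h1, h2, _⟩ := hsub hη
  have hcomp1 : Dp F (g ((0 : (Fin m → ℝ) →L[ℝ] ℝ), η)) = 0 := congrArg Prod.fst h1
  have hcomp2 : (g ((0 : (Fin m → ℝ) →L[ℝ] ℝ), η)).2 = η := congrArg Prod.snd h1
  have hgval : g ((0 : (Fin m → ℝ) →L[ℝ] ℝ), η) = (xs η, η) := Prod.ext rfl hcomp2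
  have hDxs : Dp F (xs η, η) = 0 := by rw [← hgval]; exact hcomp1
  refine ⟨?_, ?_, ?_⟩
  · rw [fderiv_partial F hF (xs η) η, hDxs]
  · intro v hv
    rw [hess_eq F hF (xs η) η]
    exact hOsub h2 v hv
  · obtain ⟨r, hr, hball⟩ := Metric.isOpen_iff.mp hOopen _ h2
    refine ⟨Metric.ball (xs η) r, Metric.ball_mem_nhds _ hr, ?_⟩
    intro x hxmem hxne
    refine strict_min F hF hDxs ?_ x hxmem hxne
    intro z hz v hv
    have hdz : dist (z, η) ((xs η), η) = dist z (xs η) := by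
      simp [Prod.dist_eq, dist_nonneg]
    have : (z, η) ∈ O := hball (by rw [Metric.mem_ball, hdz]; exact hz)
    exact hOsub this v hv
end

section
/- Let Φ, h : ℝ^m → ℝ be twice continuously differentiable and set F(x, η) = Φ(x) − η·h(x). Let η₀ ∈ ℝ and x₀ ∈ ℝ^m satisfy ∇ₓF(x₀, η₀) = 0 with ∇ₓ²F(x₀, η₀) positive definite, and let x* : U → ℝ^m be a continuously differentiable map on an open interval U ∋ η₀ with x*(η₀) = x₀, ∇ₓF(x*(η), η) = 0, and H(η) := ∇ₓ²F(x*(η), η) positive definite for every η ∈ U. Then the capacity profile η ↦ h(x*(η)) is continuously differentiable on U and its derivative equals ∇h(x*(η))ᵀ H(η)^{-1} ∇h(x*(η)) for every η ∈ U. -/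
open Filter Topology

/-- **Derivative of the capacity profile along a nondegenerate branch.**
Let `Φ, h : ℝ^m → ℝ` be twice continuously differentiable, set
`F(x, η) = Φ(x) − η·h(x)`, and let `x₀` be a critical point of
`x ↦ F(x, η₀)` with positive definite Hessian. Let `x*` be a continuously
differentiable map on an open interval `U = (a, b) ∋ η₀` with `x*(η₀) = x₀`,
`∇ₓF(x*(η), η) = 0`, and `H(η) := ∇ₓ²F(x*(η), η)` positive definite for
every `η ∈ U`. Then `η ↦ h(x*(η))` is continuously differentiable on `U`
and its derivative equals `∇h(x*(η))ᵀ H(η)⁻¹ ∇h(x*(η))`: for any `w` solving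
`H(η) w = ∇h(x*(η))` (read as linear functionals; such `w` exists and is
unique since `H(η)` is positive definite), the derivative equals
`∇h(x*(η)) · w`. -/
theorem capacity_profile_deriv {m : ℕ}
    (Φ h : (Fin m → ℝ) → ℝ)
    (hΦ : ContDiff ℝ 2 Φ) (hh : ContDiff ℝ 2 h)
    (η₀ : ℝ) (x₀ : Fin m → ℝ)
    (hcrit₀ : fderiv ℝ (fun z => Φ z - η₀ * h z) x₀ = 0)
    (hpd₀ : ∀ v : Fin m → ℝ, v ≠ 0 →
      0 < fderiv ℝ (fun y => fderiv ℝ (fun z => Φ z - η₀ * h z) y) x₀ v v)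
    (a b : ℝ) (ha : a < η₀) (hb : η₀ < b)
    (xs : ℝ → (Fin m → ℝ))
    (hxs : ContDiffOn ℝ 1 xs (Set.Ioo a b))
    (hxs₀ : xs η₀ = x₀)
    (hcrit : ∀ η ∈ Set.Ioo a b,
      fderiv ℝ (fun z => Φ z - η * h z) (xs η) = 0)
    (hpd : ∀ η ∈ Set.Ioo a b, ∀ v : Fin m → ℝ, v ≠ 0 →
      0 < fderiv ℝ (fun y => fderiv ℝ (fun z => Φ z - η * h z) y) (xs η) v v) :
    ContDiffOn ℝ 1 (fun η => h (xs η)) (Set.Ioo a b) ∧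
    ∀ η ∈ Set.Ioo a b, ∀ w : Fin m → ℝ,
      fderiv ℝ (fun y => fderiv ℝ (fun z => Φ z - η * h z) y) (xs η) w
          = fderiv ℝ h (xs η) →
      deriv (fun t => h (xs t)) η = fderiv ℝ h (xs η) w := by

  have hΦ1 : Differentiable ℝ Φ := hΦ.differentiable (by norm_num)
  have hh1 : Differentiable ℝ h := hh.differentiable (by norm_num)
  have hΦ' : ContDiff ℝ 1 (fun y => fderiv ℝ Φ y) :=
    by exact_mod_cast (contDiff_succ_iff_fderiv.mp (by exact_mod_cast hΦ : ContDiff ℝ ((1 : ℕ) + 1) Φ)).2.2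
  have hh' : ContDiff ℝ 1 (fun y => fderiv ℝ h y) :=
    by exact_mod_cast (contDiff_succ_iff_fderiv.mp (by exact_mod_cast hh : ContDiff ℝ ((1 : ℕ) + 1) h)).2.2
  have key : ∀ (η : ℝ) (y : Fin m → ℝ),
      fderiv ℝ (fun z => Φ z - η * h z) y = fderiv ℝ Φ y - η • fderiv ℝ h y := by
    intro η y
    rw [fderiv_fun_sub (hΦ1 y) ((hh1 y).const_mul η), fderiv_const_mul (hh1 y)]
  have keyH : ∀ (η : ℝ) (y : Fin m → ℝ),
      fderiv ℝ (fun x => fderiv ℝ (fun z => Φ z - η * h z) x) y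
        = fderiv ℝ (fun x => fderiv ℝ Φ x) y - η • fderiv ℝ (fun x => fderiv ℝ h x) y := by
    intro η y
    have e : (fun x => fderiv ℝ (fun z => Φ z - η * h z) x)
        = fun x => fderiv ℝ Φ x - η • fderiv ℝ h x := funext (key η)
    rw [e, fderiv_fun_sub (hΦ'.differentiable one_ne_zero y)
        ((hh'.differentiable one_ne_zero y).fun_const_smul η),
      fderiv_fun_const_smul (hh'.differentiable one_ne_zero y)]
  refine ⟨(hh.of_le one_le_two).comp_contDiffOn hxs, ?_⟩
  intro η hη w hw
  have hmem := Ioo_mem_nhds hη.1 hη.2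
  have hdx : DifferentiableAt ℝ xs η := (hxs.contDiffAt hmem).differentiableAt one_ne_zero
  set x := xs η with hx
  set v := deriv xs η with hv
  have hvd : HasDerivAt xs v η := hdx.hasDerivAt
  set AΦ := fderiv ℝ (fun y => fderiv ℝ Φ y) x with hAΦ
  set Ah := fderiv ℝ (fun y => fderiv ℝ h y) x with hAh
  have h1 : HasDerivAt (fun t => fderiv ℝ Φ (xs t)) (AΦ v) η :=
    (hΦ'.differentiable one_ne_zero x).hasFDerivAt.comp_hasDerivAt η hvd
  have h2 : HasDerivAt (fun t => fderiv ℝ h (xs t)) (Ah v) η :=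
    (hh'.differentiable one_ne_zero x).hasFDerivAt.comp_hasDerivAt η hvd
  have h3 : HasDerivAt (fun t => t • fderiv ℝ h (xs t))
      (η • Ah v + (1 : ℝ) • fderiv ℝ h x) η := (hasDerivAt_id η).smul h2
  have h4 : HasDerivAt (fun t => fderiv ℝ Φ (xs t) - t • fderiv ℝ h (xs t))
      (AΦ v - (η • Ah v + (1 : ℝ) • fderiv ℝ h x)) η := h1.sub h3
  have hzero : (fun t => fderiv ℝ Φ (xs t) - t • fderiv ℝ h (xs t))
      =ᶠ[nhds η] (fun _ => (0 : (Fin m → ℝ) →L[ℝ] ℝ)) := by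
    filter_upwards [hmem] with t ht
    rw [← key t (xs t)]
    exact hcrit t ht
  have h5 : HasDerivAt (fun t => fderiv ℝ Φ (xs t) - t • fderiv ℝ h (xs t))
      (0 : (Fin m → ℝ) →L[ℝ] ℝ) η :=
    (hasDerivAt_const η (0 : (Fin m → ℝ) →L[ℝ] ℝ)).congr_of_eventuallyEq hzero
  have heq : AΦ v - (η • Ah v + (1 : ℝ) • fderiv ℝ h x) = 0 := h4.unique h5
  have hAv : AΦ v - η • Ah v = fderiv ℝ h x := by
    have h6 := eq_of_sub_eq_zero heq
    rw [h6, one_smul]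
    abel
  -- rewrite hypothesis on w
  rw [keyH η x] at hw
  simp only [ContinuousLinearMap.sub_apply, ContinuousLinearMap.smul_apply] at hw
  -- positive definiteness in the new form
  have hpd' : ∀ u : Fin m → ℝ, u ≠ 0 → 0 < (AΦ u - η • Ah u) u := by
    intro u hu
    have := hpd η hη u hu
    rw [keyH η x] at this
    simpa only [ContinuousLinearMap.sub_apply, ContinuousLinearMap.smul_apply] using this
  have hvw : v = w := by
    by_contra hne
    have hu : v - w ≠ 0 := sub_ne_zero.mpr hne
    have hpos := hpd' (v - w) hu
    have hzero2 : AΦ (v - w) - η • Ah (v - w) = 0 := by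
      rw [map_sub, map_sub, smul_sub]
      rw [show AΦ v - AΦ w - (η • Ah v - η • Ah w)
          = (AΦ v - η • Ah v) - (AΦ w - η • Ah w) by abel, hAv, hw, sub_self]
    rw [hzero2] at hpos
    simp at hpos
  have hcomp : HasDerivAt (fun t => h (xs t)) (fderiv ℝ h x v) η :=
    (hh1 x).hasFDerivAt.comp_hasDerivAt η hvd
  rw [hcomp.deriv, hvw]
end

section
/- Let Φ, h : ℝ^m → ℝ be twice continuously differentiable, set F(x, η) = Φ(x) − η·h(x), and let x* : U → ℝ^m be a continuously differentiable map on an open interval U such that ∇ₓF(x*(η), η) = 0 and H(η) := ∇ₓ²F(x*(η), η) is positive definite for every η ∈ U. Then the function η ↦ h(x*(η)) is nondecreasing on U: for all η₁ ≤ η₂ in U, h(x*(η₁)) ≤ h(x*(η₂)). -/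
open Filter Topology

/-- **Monotonicity of the capacity profile along a nondegenerate branch.**
Let `Φ, h : ℝ^m → ℝ` be twice continuously differentiable, set
`F(x, η) = Φ(x) − η·h(x)`, and let `x* : U → ℝ^m` be a continuously
differentiable map on an open interval `U = (a, b)` with
`∇ₓF(x*(η), η) = 0` and `H(η) := ∇ₓ²F(x*(η), η)` positive definite for
every `η ∈ U`. Then `η ↦ h(x*(η))` is nondecreasing on `U`. -/
theorem capacity_profile_monotone {m : ℕ}
    (Φ h : (Fin m → ℝ) → ℝ)
    (hΦ : ContDiff ℝ 2 Φ) (hh : ContDiff ℝ 2 h)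
    (a b : ℝ)
    (xs : ℝ → (Fin m → ℝ))
    (hxs : ContDiffOn ℝ 1 xs (Set.Ioo a b))
    (hcrit : ∀ η ∈ Set.Ioo a b,
      fderiv ℝ (fun z => Φ z - η * h z) (xs η) = 0)
    (hpd : ∀ η ∈ Set.Ioo a b, ∀ v : Fin m → ℝ, v ≠ 0 →
      0 < fderiv ℝ (fun y => fderiv ℝ (fun z => Φ z - η * h z) y) (xs η) v v) :
    ∀ η₁ ∈ Set.Ioo a b, ∀ η₂ ∈ Set.Ioo a b,
      η₁ ≤ η₂ → h (xs η₁) ≤ h (xs η₂) := by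
  have hΦ1 : Differentiable ℝ Φ := hΦ.differentiable (by norm_num)
  have hh1 : Differentiable ℝ h := hh.differentiable (by norm_num)
  have hΦ'c : ContDiff ℝ 1 (fderiv ℝ Φ) := hΦ.fderiv_right (by norm_num)
  have hh'c : ContDiff ℝ 1 (fderiv ℝ h) := hh.fderiv_right (by norm_num)
  have hΦ'd : Differentiable ℝ (fderiv ℝ Φ) := hΦ'c.differentiable (by norm_num)
  have hh'd : Differentiable ℝ (fderiv ℝ h) := hh'c.differentiable (by norm_num)
  -- Lemma 1
  have lem1 : ∀ (η : ℝ) (x : Fin m → ℝ),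
      fderiv ℝ (fun z => Φ z - η * h z) x = fderiv ℝ Φ x - η • fderiv ℝ h x := by
    intro η x
    have h1 : HasFDerivAt (fun z => Φ z - η * h z)
        (fderiv ℝ Φ x - η • fderiv ℝ h x) x :=
      (hΦ1 x).hasFDerivAt.sub ((hh1 x).hasFDerivAt.const_mul η)
    exact h1.fderiv
  -- Lemma 2
  have lem2 : ∀ (η : ℝ) (x : Fin m → ℝ),
      fderiv ℝ (fun y => fderiv ℝ (fun z => Φ z - η * h z) y) x
        = fderiv ℝ (fderiv ℝ Φ) x - η • fderiv ℝ (fderiv ℝ h) x := by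
    intro η x
    have hfun : (fun y => fderiv ℝ (fun z => Φ z - η * h z) y)
        = fun y => fderiv ℝ Φ y - η • fderiv ℝ h y := funext (lem1 η)
    rw [hfun]
    have h1 : HasFDerivAt (fun y => fderiv ℝ Φ y - η • fderiv ℝ h y)
        (fderiv ℝ (fderiv ℝ Φ) x - η • fderiv ℝ (fderiv ℝ h) x) x :=
      (hΦ'd x).hasFDerivAt.sub ((hh'd x).hasFDerivAt.const_smul η)
    exact h1.fderiv
  -- derivative of the composite is nonneg on Ioo
  have key : ∀ η ∈ Set.Ioo a b, ∃ c : ℝ, 0 ≤ c ∧ HasDerivAt (fun t => h (xs t)) c η := by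
    intro η hη
    have hxd : DifferentiableAt ℝ xs η := by
      have := (hxs.differentiableOn (by norm_num)).differentiableAt
        (isOpen_Ioo.mem_nhds hη)
      exact this
    set v := deriv xs η with hv
    have hxv : HasDerivAt xs v η := hxd.hasDerivAt
    -- derivative chain for h ∘ xs
    have hcomp : HasDerivAt (fun t => h (xs t)) (fderiv ℝ h (xs η) v) η :=
      (hh1 (xs η)).hasFDerivAt.comp_hasDerivAt η hxv
    refine ⟨fderiv ℝ h (xs η) v, ?_, hcomp⟩
    -- the map u t = Φ'(xs t) - t • h'(xs t) vanishes on Ioo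
    set u : ℝ → ((Fin m → ℝ) →L[ℝ] ℝ) :=
      fun t => fderiv ℝ Φ (xs t) - t • fderiv ℝ h (xs t) with hu
    have hu0 : ∀ t ∈ Set.Ioo a b, u t = 0 := by
      intro t ht
      have := hcrit t ht
      rw [lem1 t (xs t)] at this
      exact this
    -- derivative of u at η
    have hd1 : HasDerivAt (fun t => fderiv ℝ Φ (xs t))
        (fderiv ℝ (fderiv ℝ Φ) (xs η) v) η :=
      (hΦ'd (xs η)).hasFDerivAt.comp_hasDerivAt η hxv
    have hd2 : HasDerivAt (fun t => fderiv ℝ h (xs t))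
        (fderiv ℝ (fderiv ℝ h) (xs η) v) η :=
      (hh'd (xs η)).hasFDerivAt.comp_hasDerivAt η hxv
    have hd3 : HasDerivAt (fun t : ℝ => t • fderiv ℝ h (xs t))
        (η • (fderiv ℝ (fderiv ℝ h) (xs η) v) + (1:ℝ) • fderiv ℝ h (xs η)) η :=
      (hasDerivAt_id η).smul hd2
    have hdu : HasDerivAt u
        (fderiv ℝ (fderiv ℝ Φ) (xs η) v
          - (η • (fderiv ℝ (fderiv ℝ h) (xs η) v) + (1:ℝ) • fderiv ℝ h (xs η))) η :=
      hd1.sub hd3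
    have hdu0 : HasDerivAt u 0 η := by
      have heq : u =ᶠ[𝓝 η] fun _ => 0 :=
        Filter.eventuallyEq_of_mem (isOpen_Ioo.mem_nhds hη) hu0
      exact (hasDerivAt_const η (0 : (Fin m → ℝ) →L[ℝ] ℝ)).congr_of_eventuallyEq heq
    have hzero := hdu.unique hdu0
    -- H v = h'(xs η)
    have hHv : fderiv ℝ (fderiv ℝ Φ) (xs η) v - η • (fderiv ℝ (fderiv ℝ h) (xs η) v)
        = fderiv ℝ h (xs η) := by
      have : fderiv ℝ (fderiv ℝ Φ) (xs η) v
          - (η • (fderiv ℝ (fderiv ℝ h) (xs η) v) + (1:ℝ) • fderiv ℝ h (xs η)) = 0 := hzero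
      rw [one_smul] at this
      abel_nf at this ⊢
      linear_combination (norm := module) this
    -- conclude nonnegativity
    by_cases hv0 : v = 0
    · simp [hv0]
    · have hp := hpd η hη v hv0
      rw [lem2 η (xs η)] at hp
      have : (fderiv ℝ (fderiv ℝ Φ) (xs η) v - η • (fderiv ℝ (fderiv ℝ h) (xs η) v)) v
          = fderiv ℝ h (xs η) v := by rw [hHv]
      simp only [ContinuousLinearMap.sub_apply, ContinuousLinearMap.smul_apply] at hp this
      linarith
  -- monotonicity from nonnegative derivative
  have hmono : MonotoneOn (fun t => h (xs t)) (Set.Ioo a b) := by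
    apply monotoneOn_of_deriv_nonneg (convex_Ioo a b)
    · intro t ht
      obtain ⟨c, _, hc⟩ := key t ht
      exact hc.continuousAt.continuousWithinAt
    · intro t ht
      rw [interior_Ioo] at ht
      obtain ⟨c, _, hc⟩ := key t ht
      exact hc.differentiableAt.differentiableWithinAt
    · intro t ht
      rw [interior_Ioo] at ht
      obtain ⟨c, hc0, hc⟩ := key t ht
      rw [hc.deriv]
      exact hc0
  intro η₁ h1 η₂ h2 hle
  exact hmono h1 h2 hle
end
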